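/- arXiv:2403.07685 — 4 statements merged into one kernel-verified Lean document; each statement's English description precedes it below -/
import Mathlib

section
/- In the binary search tree interval splitting process, there exists an almost surely finite random variable $K_1$ such that for all $k \ge K_1$, $\max_{\alpha\in[0,1]} I_{\alpha,k} \le k\,(2/3)^{k/2}$, where $I_{\alpha,k}$ denotes the length of the level-$k$ interval containing $\alpha$. -/
open MeasureTheory ProbabilityTheory
open scoped ENNReal

lemma aux_sq_integral_Icc : ∫ x in Set.Icc (0:ℝ) 1, x ^ 2 = 1/3 := by
  rw [MeasureTheory.integral_Icc_eq_integral_Ioc, ← intervalIntegral.integral_of_le zero_le_one,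
    integral_pow]
  norm_num

lemma aux_one_sub_sq_integral_Icc : ∫ x in Set.Icc (0:ℝ) 1, (1 - x) ^ 2 = 1/3 := by
  rw [MeasureTheory.integral_Icc_eq_integral_Ioc, ← intervalIntegral.integral_of_le zero_le_one,
    intervalIntegral.integral_comp_sub_left (fun x => x ^ 2) 1]
  norm_num [integral_pow]

lemma aux_getD_append_lt (l : List Bool) (b : Bool) (i : ℕ) (h : i < l.length) :
    (l ++ [b]).getD i true = l.getD i true := by
  simp [List.getD, List.getElem?_append_left h]

/-- There is an a.s. finite random level `K₁` such that for all `k ≥ K₁`, every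
level-`k` interval of the recursive uniform splitting of `[0,1)` has length at most
`k (2/3)^{k/2}`; in particular `max_{α∈[0,1]} I_{α,k} ≤ k (2/3)^{k/2}`. -/
theorem interval_lengths_eventually_small
    (Ω : Type*) [MeasureSpace Ω] [IsProbabilityMeasure (ℙ : Measure Ω)]
    (V : List Bool → Ω → ℝ)
    (hVmeas : ∀ φ, Measurable (V φ))
    (hViid : iIndepFun V ℙ)
    (hVunif : ∀ φ, Measure.map (V φ) ℙ = volume.restrict (Set.Icc (0:ℝ) 1))
    (I : List Bool → Ω → ℝ)
    (hI0 : ∀ ω, I [] ω = 1)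
    (hIfalse : ∀ φ ω, I (φ ++ [false]) ω = I φ ω * V φ ω)
    (hItrue : ∀ φ ω, I (φ ++ [true]) ω = I φ ω * (1 - V φ ω)) :
    ∀ᵐ ω ∂ℙ, ∃ K₁ : ℕ, ∀ k : ℕ, K₁ ≤ k → ∀ φ : List Bool, φ.length = k →
      I φ ω ≤ (k : ℝ) * (2 / 3 : ℝ) ^ ((k : ℝ) / 2) := by
  classical
  -- measurability of I φ
  have hImeas : ∀ φ, Measurable (I φ) := by
    intro φ
    induction φ using List.reverseRecOn with
    | nil =>
      have : I [] = fun _ => (1:ℝ) := funext hI0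
      rw [this]; exact measurable_const
    | append_singleton ψ b ih =>
      cases b
      · have : I (ψ ++ [false]) = fun ω => I ψ ω * V ψ ω := funext (hIfalse ψ)
        rw [this]; exact ih.mul (hVmeas ψ)
      · have : I (ψ ++ [true]) = fun ω => I ψ ω * (1 - V ψ ω) := funext (hItrue ψ)
        rw [this]; exact ih.mul (measurable_const.sub (hVmeas ψ))
  -- prefix product formula
  have hprod : ∀ (φ : List Bool) (ω : Ω),
      I φ ω = ∏ i ∈ Finset.range φ.length,
        (if φ.getD i true then 1 - V (φ.take i) ω else V (φ.take i) ω) := by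
    intro φ
    induction φ using List.reverseRecOn with
    | nil => intro ω; simp [hI0]
    | append_singleton ψ b ih =>
      intro ω
      have hlen : (ψ ++ [b]).length = ψ.length + 1 := by simp
      rw [hlen, Finset.prod_range_succ]
      have h1 : ∀ i ∈ Finset.range ψ.length,
          (if (ψ ++ [b]).getD i true then 1 - V ((ψ ++ [b]).take i) ω
            else V ((ψ ++ [b]).take i) ω)
          = (if ψ.getD i true then 1 - V (ψ.take i) ω else V (ψ.take i) ω) := by
        intro i hi
        rw [Finset.mem_range] at hi
        rw [aux_getD_append_lt ψ b i hi, List.take_append_of_le_length hi.le]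
      rw [Finset.prod_congr rfl h1, ← ih ω]
      have h2 : (ψ ++ [b]).take ψ.length = ψ := by simp
      have h3 : (ψ ++ [b]).getD ψ.length true = b := by simp
      rw [h2, h3]
      cases b
      · simp [hIfalse]
      · simp [hItrue]
  -- integrability and integrals of functions of the uniform variables
  have hVsq_int : ∀ (φ : List Bool) (f : ℝ → ℝ), Continuous f →
      Integrable (fun ω => f (V φ ω)) ℙ := by
    intro φ f hf
    have h1 : Integrable f (Measure.map (V φ) ℙ) := by
      rw [hVunif φ]
      exact (hf.integrableOn_Icc (a := (0:ℝ)) (b := 1))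
    exact (integrable_map_measure hf.aestronglyMeasurable (hVmeas φ).aemeasurable).mp h1
  have hVsq_val : ∀ (φ : List Bool) (f : ℝ → ℝ), Continuous f →
      ∫ ω, f (V φ ω) ∂ℙ = ∫ x in Set.Icc (0:ℝ) 1, f x := by
    intro φ f hf
    rw [← hVunif φ, integral_map (hVmeas φ).aemeasurable hf.aestronglyMeasurable]
  have hgm : ∀ c : Bool, Measurable (fun x : ℝ => (if c then 1 - x else x) ^ 2) := by
    intro c
    cases c
    · simpa using (measurable_id.pow_const 2)
    · simpa using ((measurable_const.sub measurable_id).pow_const 2)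
  -- second moments
  have hmom : ∀ φ : List Bool, Integrable (fun ω => (I φ ω) ^ 2) ℙ ∧
      ∫ ω, (I φ ω) ^ 2 ∂ℙ = (1/3 : ℝ) ^ φ.length := by
    intro φ
    induction φ using List.reverseRecOn with
    | nil =>
      constructor
      · simpa [hI0] using (integrable_const (1:ℝ))
      · simp [hI0]
    | append_singleton ψ b ih =>
      set χ := ψ ++ [b] with hχ
      set W : List Bool → Ω → ℝ :=
        fun τ ω => (if χ.getD τ.length true then 1 - V τ ω else V τ ω) ^ 2 with hW
      have hWmeas : ∀ τ, Measurable (W τ) := fun τ => (hgm _).comp (hVmeas τ)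
      have hWindep : iIndepFun W ℙ :=
        hViid.comp (fun τ x => (if χ.getD τ.length true then 1 - x else x) ^ 2)
          (fun τ => hgm _)
      set s : Finset (List Bool) := (Finset.range ψ.length).image (fun i => ψ.take i) with hs
      have hψs : ψ ∉ s := by
        intro h
        rcases Finset.mem_image.mp h with ⟨i, hi, hip⟩
        rw [Finset.mem_range] at hi
        have : (ψ.take i).length = i := by simp [hi.le]
        rw [hip] at this
        omega
      have hindep0 : IndepFun (∏ τ ∈ s, W τ) (W ψ) ℙ :=
        hWindep.indepFun_finsetProd_of_notMem hWmeas hψs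
      have hIψsq : (fun ω => (I ψ ω) ^ 2) = ∏ τ ∈ s, W τ := by
        funext ω
        rw [Finset.prod_apply]
        have hinj : Set.InjOn (fun i => ψ.take i) (Finset.range ψ.length) := by
          intro i hi j hj hij
          simp only [Finset.coe_range, Set.mem_Iio] at hi hj
          have h1 : (ψ.take i).length = i := by simp [hi.le]
          have h2 : (ψ.take j).length = j := by simp [hj.le]
          have h3 := congrArg List.length hij
          simp only at h3
          rw [h1, h2] at h3
          exact h3
        rw [hs, Finset.prod_image hinj, hprod ψ ω, ← Finset.prod_pow]
        refine Finset.prod_congr rfl ?_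
        intro i hi
        rw [Finset.mem_range] at hi
        have hlen : (ψ.take i).length = i := by simp [hi.le]
        have hgd : χ.getD i true = ψ.getD i true := aux_getD_append_lt ψ b i hi
        simp only [hW, hlen, hgd]
      have hgDb : χ.getD ψ.length true = b := by simp [hχ]
      have hWψ : W ψ = fun ω => (if b then 1 - V ψ ω else V ψ ω) ^ 2 := by
        funext ω
        simp only [hW]
        rw [hgDb]
      have hindep : IndepFun (fun ω => (I ψ ω) ^ 2) (W ψ) ℙ := by
        rw [hIψsq]; exact hindep0
      have hIχ : (fun ω => (I χ ω) ^ 2) = (fun ω => (I ψ ω) ^ 2) * W ψ := by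
        funext ω
        rw [hχ, Pi.mul_apply, hWψ]
        cases b
        · simp [hIfalse, mul_pow]
        · simp [hItrue, mul_pow]
      have hWψ_int : Integrable (W ψ) ℙ := by
        rw [hWψ]
        cases b
        · simpa using hVsq_int ψ (fun x => x ^ 2) (by fun_prop)
        · simpa using hVsq_int ψ (fun x => (1 - x) ^ 2) (by fun_prop)
      have hWψ_val : ∫ ω, W ψ ω ∂ℙ = 1/3 := by
        rw [hWψ]
        cases b
        · simp only [Bool.false_eq_true, if_false]
          rw [show (∫ ω, (V ψ ω) ^ 2 ∂ℙ) = ∫ x in Set.Icc (0:ℝ) 1, x ^ 2 from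
            hVsq_val ψ (fun x => x ^ 2) (by fun_prop), aux_sq_integral_Icc]
        · simp only [if_true]
          rw [show (∫ ω, (1 - V ψ ω) ^ 2 ∂ℙ) = ∫ x in Set.Icc (0:ℝ) 1, (1 - x) ^ 2 from
            hVsq_val ψ (fun x => (1 - x) ^ 2) (by fun_prop), aux_one_sub_sq_integral_Icc]
      constructor
      · rw [hIχ]; exact hindep.integrable_mul ih.1 hWψ_int
      · rw [hIχ]
        calc ∫ ω, ((fun ω => (I ψ ω) ^ 2) * W ψ) ω ∂ℙ
            = (∫ ω, (I ψ ω) ^ 2 ∂ℙ) * ∫ ω, W ψ ω ∂ℙ :=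
              hindep.integral_mul_eq_mul_integral ih.1.aestronglyMeasurable hWψ_int.aestronglyMeasurable
          _ = (1/3 : ℝ) ^ χ.length := by
              rw [ih.2, hWψ_val, show χ.length = ψ.length + 1 by simp [hχ], pow_succ]
  -- the bad events
  set A : ℕ → Set Ω := fun k =>
    {ω | ∃ v : Fin k → Bool,
      (k : ℝ) * (2 / 3 : ℝ) ^ ((k : ℝ) / 2) < |I (List.ofFn v) ω|} with hA
  -- Markov bound for each word
  have hMarkov : ∀ k : ℕ, 1 ≤ k → ∀ φ : List Bool, φ.length = k →
      ℙ {ω | (k : ℝ) * (2 / 3 : ℝ) ^ ((k : ℝ) / 2) < |I φ ω|}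
        ≤ ENNReal.ofReal ((1/2 : ℝ) ^ k / (k : ℝ) ^ 2) := by
    intro k hk φ hφ
    set t : ℝ := (k : ℝ) * (2 / 3 : ℝ) ^ ((k : ℝ) / 2) with ht
    have hrpos : (0:ℝ) < (2 / 3 : ℝ) ^ ((k : ℝ) / 2) := Real.rpow_pos_of_pos (by norm_num) _
    have htpos : 0 < t := by
      apply mul_pos _ hrpos
      exact_mod_cast hk
    have htsq : t ^ 2 = (k : ℝ) ^ 2 * (2/3 : ℝ) ^ k := by
      rw [ht, mul_pow]
      congr 1
      rw [← Real.rpow_natCast ((2/3:ℝ) ^ ((k:ℝ)/2)) 2, ← Real.rpow_mul (by norm_num)]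
      have h2 : (k:ℝ)/2 * ((2:ℕ):ℝ) = (k:ℝ) := by push_cast; ring
      rw [h2, Real.rpow_natCast]
    have hsub : {ω | t < |I φ ω|} ⊆ {ω | t ^ 2 ≤ (I φ ω) ^ 2} := by
      intro ω hω
      simp only [Set.mem_setOf_eq] at hω ⊢
      calc t ^ 2 ≤ |I φ ω| ^ 2 := by
            apply pow_le_pow_left₀ htpos.le hω.le
        _ = (I φ ω) ^ 2 := sq_abs _
    refine le_trans (measure_mono hsub) ?_
    have hmk := mul_meas_ge_le_integral_of_nonneg
      (μ := (ℙ : Measure Ω)) (f := fun ω => (I φ ω) ^ 2)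
      (Filter.Eventually.of_forall fun ω => sq_nonneg _) (hmom φ).1 (t ^ 2)
    rw [(hmom φ).2, hφ] at hmk
    have htoReal : (ℙ {ω | t ^ 2 ≤ (I φ ω) ^ 2}).toReal ≤ (1/3 : ℝ) ^ k / t ^ 2 := by
      rw [le_div_iff₀ (by positivity)]
      rw [measureReal_def] at hmk
      linarith [hmk]
    have hfin : ℙ {ω | t ^ 2 ≤ (I φ ω) ^ 2} ≠ ∞ := measure_ne_top _ _
    have hle := (ENNReal.le_ofReal_iff_toReal_le hfin (by positivity)).mpr htoReal
    refine le_trans hle (le_of_eq ?_)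
    congr 1
    rw [htsq, div_eq_div_iff (by positivity) (by positivity)]
    have h1 : ((1:ℝ)/2 * (2/3)) ^ k = (1/3 : ℝ) ^ k := by norm_num
    rw [show (1/2:ℝ) ^ k * ((k:ℝ) ^ 2 * (2/3 : ℝ) ^ k)
        = ((1:ℝ)/2 * (2/3)) ^ k * (k:ℝ) ^ 2 by rw [mul_pow]; ring, h1]
  -- bound the measure of the bad events
  have hAbound : ∀ k : ℕ, 1 ≤ k → ℙ (A k) ≤ ENNReal.ofReal (1 / (k : ℝ) ^ 2) := by
    intro k hk
    have hunion : A k = ⋃ v : Fin k → Bool,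
        {ω | (k : ℝ) * (2 / 3 : ℝ) ^ ((k : ℝ) / 2) < |I (List.ofFn v) ω|} := by
      ext ω; simp [hA]
    rw [hunion]
    refine le_trans (measure_iUnion_fintype_le ℙ _) ?_
    have hcard : (Finset.univ : Finset (Fin k → Bool)).card = 2 ^ k := by
      simp [Finset.card_univ]
    calc ∑ v : Fin k → Bool, ℙ {ω | (k : ℝ) * (2/3:ℝ) ^ ((k:ℝ)/2) < |I (List.ofFn v) ω|}
        ≤ ∑ _v : Fin k → Bool, ENNReal.ofReal ((1/2 : ℝ) ^ k / (k : ℝ) ^ 2) := by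
          refine Finset.sum_le_sum fun v _ => ?_
          exact hMarkov k hk (List.ofFn v) (by simp)
      _ = (2 ^ k : ℕ) * ENNReal.ofReal ((1/2 : ℝ) ^ k / (k : ℝ) ^ 2) := by
          rw [Finset.sum_const, hcard, nsmul_eq_mul]
      _ = ENNReal.ofReal (1 / (k : ℝ) ^ 2) := by
          rw [show ((2 ^ k : ℕ) : ℝ≥0∞) = ENNReal.ofReal ((2:ℝ) ^ k) by
            simp [ENNReal.ofReal_pow]]
          rw [← ENNReal.ofReal_mul (by positivity)]
          congr 1
          rw [show (2:ℝ) ^ k * ((1/2:ℝ) ^ k / (k:ℝ) ^ 2)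
              = ((2:ℝ) * (1/2)) ^ k / (k:ℝ) ^ 2 by rw [mul_pow]; ring]
          norm_num
  -- summability of the bounds
  have hsum : (∑' k, ℙ (A k)) ≠ ∞ := by
    have hle : ∀ k : ℕ, ℙ (A k) ≤
        ENNReal.ofReal (1 / (k : ℝ) ^ 2) + (if k = 0 then 1 else 0) := by
      intro k
      rcases Nat.eq_zero_or_pos k with h0 | h1
      · subst h0
        simp only [if_pos rfl]
        calc ℙ (A 0) ≤ 1 := prob_le_one
          _ ≤ _ := le_add_self
      · simp only [if_neg (Nat.pos_iff_ne_zero.mp h1)]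
        simpa using hAbound k h1
    refine ne_of_lt (lt_of_le_of_lt (ENNReal.tsum_le_tsum hle) ?_)
    rw [ENNReal.tsum_add]
    apply ENNReal.add_lt_top.mpr
    constructor
    · have hs : Summable (fun k : ℕ => 1 / (k : ℝ) ^ 2) := by
        simpa using Real.summable_one_div_nat_pow.mpr one_lt_two
      rw [← ENNReal.ofReal_tsum_of_nonneg (fun k => by positivity) hs]
      exact ENNReal.ofReal_lt_top
    · rw [tsum_eq_single 0 (fun b hb => by simp [hb])]
      simp
  -- Borel–Cantelli
  have hBC := ae_eventually_notMem (μ := (ℙ : Measure Ω)) hsum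
  filter_upwards [hBC] with ω hω
  rcases Filter.eventually_atTop.mp hω with ⟨N, hN⟩
  refine ⟨N, ?_⟩
  intro k hk φ hφ
  subst hφ
  have hnot := hN φ.length hk
  rw [hA] at hnot
  simp only [Set.mem_setOf_eq, not_exists, not_lt] at hnot
  have hfin := hnot (fun i => φ.get i)
  rw [List.ofFn_get] at hfin
  exact le_trans (le_abs_self _) hfin
end

section
/- Let $(Z_\phi)_{\phi\in\{0,1\}^*}$ be random variables such that, conditionally on the interval lengths, $Z_\phi$ is centered Gaussian with variance $I_\phi - I_\phi^2$. Then almost surely $|Z_\phi| < 2\sqrt{|\phi| I_\phi}$ for all but finitely many $\phi$. -/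
open MeasureTheory ProbabilityTheory
open scoped ENNReal

section Aux
open Real Set
open scoped NNReal

lemma tail_half (t : ℝ) (ht : 1 ≤ t) :
    gaussianReal 0 1 {x : ℝ | t ≤ x} ≤ ENNReal.ofReal (Real.exp (t - t^2/2)) := by
  have ht0 : (0:ℝ) < t := lt_of_lt_of_le one_pos ht
  rw [gaussianReal_apply 0 one_ne_zero]
  have hset : {x : ℝ | t ≤ x} = Set.Ici t := rfl
  rw [hset]
  calc ∫⁻ x in Set.Ici t, gaussianPDF 0 1 x
      ≤ ∫⁻ x in Set.Ici t, ENNReal.ofReal (Real.exp (t - t^2/2) * Real.exp (-x)) := by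
        refine setLIntegral_mono (by fun_prop) (fun x hx => ?_)
        rw [gaussianPDF]
        refine ENNReal.ofReal_le_ofReal ?_
        rw [← Real.exp_add]
        unfold gaussianPDFReal
        have h1 : (Real.sqrt (2 * π * ((1:ℝ≥0):ℝ)))⁻¹ ≤ 1 := by
          rw [inv_le_one_iff₀]
          right
          rw [NNReal.coe_one, mul_one]
          exact Real.one_le_sqrt.mpr (by nlinarith [Real.pi_gt_three])
        have hx' : t ≤ x := hx
        calc (Real.sqrt (2 * π * ((1:ℝ≥0):ℝ)))⁻¹ * rexp (-(x - 0) ^ 2 / (2 * ((1:ℝ≥0):ℝ)))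
            ≤ 1 * rexp (-(x - 0) ^ 2 / (2 * ((1:ℝ≥0):ℝ))) :=
              mul_le_mul_of_nonneg_right h1 (Real.exp_nonneg _)
          _ ≤ rexp (t - t^2/2 + -x) := by
              rw [one_mul]
              apply Real.exp_le_exp.mpr
              rw [NNReal.coe_one]
              nlinarith [mul_nonneg (sub_nonneg.mpr hx') (sub_nonneg.mpr (le_trans ht hx'))]
    _ = ENNReal.ofReal (Real.exp (t - t^2/2)) * ∫⁻ x in Set.Ici t, ENNReal.ofReal (Real.exp (-x)) := by
        rw [← lintegral_const_mul' _ _ ENNReal.ofReal_ne_top]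
        congr 1 with x
        rw [← ENNReal.ofReal_mul (Real.exp_nonneg _)]
    _ ≤ ENNReal.ofReal (Real.exp (t - t^2/2)) * 1 := by
        refine mul_le_mul_right ?_ _
        rw [← setLIntegral_congr (Ioi_ae_eq_Ici (a := t) (μ := volume)),
          ← ofReal_integral_eq_lintegral_ofReal]
        · rw [integral_exp_neg_Ioi]
          exact ENNReal.ofReal_le_one.mpr (Real.exp_le_one_iff.mpr (by linarith))
        · simpa [neg_one_mul, IntegrableOn] using exp_neg_integrableOn_Ioi t one_pos
        · exact Filter.Eventually.of_forall (fun x => Real.exp_nonneg _)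
    _ = ENNReal.ofReal (Real.exp (t - t^2/2)) := mul_one _

lemma tail_neg (t : ℝ) :
    gaussianReal 0 1 {x : ℝ | x ≤ -t} = gaussianReal 0 1 {x : ℝ | t ≤ x} := by
  have hmap : (gaussianReal 0 1).map (fun x => (-1 : ℝ) * x) = gaussianReal 0 1 := by
    rw [gaussianReal_map_const_mul (-1 : ℝ)]
    norm_num
  conv_lhs => rw [← hmap]
  rw [Measure.map_apply (by fun_prop) (show MeasurableSet {x : ℝ | x ≤ -t} from measurableSet_Iic)]
  congr 1
  ext x
  simp only [Set.mem_preimage, Set.mem_setOf_eq]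
  constructor <;> intro h <;> linarith

lemma tail_abs (t : ℝ) (ht : 1 ≤ t) :
    gaussianReal 0 1 {x : ℝ | t ≤ |x|} ≤ ENNReal.ofReal (2 * Real.exp (t - t^2/2)) := by
  have hsub : {x : ℝ | t ≤ |x|} ⊆ {x : ℝ | t ≤ x} ∪ {x : ℝ | x ≤ -t} := by
    intro x hx
    rcases abs_cases x with ⟨h, _⟩ | ⟨h, _⟩
    · left; exact Set.mem_setOf_eq ▸ (h ▸ hx)
    · right; simp only [Set.mem_setOf_eq] at *; linarith [hx, h]
  calc gaussianReal 0 1 {x : ℝ | t ≤ |x|}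
      ≤ gaussianReal 0 1 ({x : ℝ | t ≤ x} ∪ {x : ℝ | x ≤ -t}) := measure_mono hsub
    _ ≤ gaussianReal 0 1 {x : ℝ | t ≤ x} + gaussianReal 0 1 {x : ℝ | x ≤ -t} := measure_union_le _ _
    _ ≤ ENNReal.ofReal (Real.exp (t - t^2/2)) + ENNReal.ofReal (Real.exp (t - t^2/2)) := by
        rw [tail_neg]
        exact add_le_add (tail_half t ht) (tail_half t ht)
    _ = ENNReal.ofReal (2 * Real.exp (t - t^2/2)) := by
        rw [← ENNReal.ofReal_add (Real.exp_nonneg _) (Real.exp_nonneg _)]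
        ring_nf

lemma tail_n (n : ℕ) :
    gaussianReal 0 1 {x : ℝ | max 1 (2 * Real.sqrt n) ≤ |x|}
      ≤ ENNReal.ofReal (2 * Real.exp 1 * Real.exp (-(n:ℝ))) := by
  set t := max 1 (2 * Real.sqrt n) with htdef
  have ht : 1 ≤ t := le_max_left _ _
  refine (tail_abs t ht).trans (ENNReal.ofReal_le_ofReal ?_)
  rw [mul_assoc, ← Real.exp_add]
  refine mul_le_mul_of_nonneg_left (Real.exp_le_exp.mpr ?_) (by norm_num)
  have hu : (0:ℝ) ≤ Real.sqrt n := Real.sqrt_nonneg _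
  have hu2 : (Real.sqrt n)^2 = (n:ℝ) := Real.sq_sqrt (Nat.cast_nonneg n)
  rcases max_cases 1 (2 * Real.sqrt n) with ⟨h1, h2⟩ | ⟨h1, h2⟩
  · rw [htdef, h1]; nlinarith
  · rw [htdef, h1]; nlinarith [sq_nonneg (Real.sqrt n - 1)]

lemma sum_bound :
    ∑' (φ : List Bool), ENNReal.ofReal (2 * Real.exp 1 * Real.exp (-(φ.length:ℝ))) ≠ ⊤ := by
  set g : ℕ → ℝ≥0∞ := fun n => ENNReal.ofReal (2 * Real.exp 1 * Real.exp (-(n:ℝ))) with hg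
  have h1 : ∑' (φ : List Bool), g φ.length
      = ∑' (n : ℕ), ∑' (_ : List.Vector Bool n), g n := by
    rw [← (Equiv.sigmaFiberEquiv (List.length : List Bool → ℕ)).tsum_eq (fun φ => g φ.length),
      ENNReal.tsum_sigma']
    refine tsum_congr fun n => (tsum_congr fun v => ?_).trans
      (rfl : ∑' (_ : {l : List Bool // l.length = n}), g n = ∑' (_ : List.Vector Bool n), g n)
    simp only [Equiv.sigmaFiberEquiv, Equiv.coe_fn_mk]
    rw [v.2]
  have h2 : ∀ n : ℕ, ∑' (_ : List.Vector Bool n), g n = (2:ℝ≥0∞)^n * g n := by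
    intro n
    rw [tsum_fintype, Finset.sum_const, Finset.card_univ, card_vector, nsmul_eq_mul]
    push_cast
    rfl
  have h3 : ∀ n : ℕ, (2:ℝ≥0∞)^n * g n
      = ENNReal.ofReal (2 * Real.exp 1 * (2 / Real.exp 1)^n) := by
    intro n
    have h2n : ((2:ℝ≥0∞))^n = ENNReal.ofReal ((2:ℝ)^n) := by
      rw [ENNReal.ofReal_pow (by norm_num)]
      norm_num
    rw [h2n, hg, ← ENNReal.ofReal_mul (by positivity)]
    congr 1
    rw [div_pow, div_eq_mul_inv]
    have : Real.exp (-(n:ℝ)) = ((Real.exp 1)^n)⁻¹ := by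
      rw [← Real.exp_nat_mul, ← Real.exp_neg]
      norm_num
    rw [this]
    ring
  rw [h1]
  simp_rw [h2, h3]
  rw [← ENNReal.ofReal_tsum_of_nonneg (fun n => by positivity)
    (((summable_geometric_of_lt_one (by positivity)
      (by rw [div_lt_one (Real.exp_pos 1)]; nlinarith [Real.exp_one_gt_d9])).mul_left _))]
  exact ENNReal.ofReal_ne_top
end Aux

/-- If, conditionally on the interval lengths `I φ` of the recursive uniform splitting
of `[0,1)`, the random variables `Z φ` are centred Gaussian with variance
`I φ - I φ ^ 2` (represented as `Z φ = √(I φ - I φ²) · N φ` with `N φ` i.i.d. standard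
normals independent of the splitting), then almost surely `|Z φ| < 2 √(|φ| I φ)` for
all but finitely many words `φ`. -/
theorem Z_eventually_small
    (Ω : Type*) [MeasureSpace Ω] [IsProbabilityMeasure (ℙ : Measure Ω)]
    (V : List Bool → Ω → ℝ)
    (hVmeas : ∀ φ, Measurable (V φ))
    (hViid : iIndepFun V ℙ)
    (hVunif : ∀ φ, Measure.map (V φ) ℙ = volume.restrict (Set.Icc (0:ℝ) 1))
    (I : List Bool → Ω → ℝ)
    (hI0 : ∀ ω, I [] ω = 1)
    (hIfalse : ∀ φ ω, I (φ ++ [false]) ω = I φ ω * V φ ω)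
    (hItrue : ∀ φ ω, I (φ ++ [true]) ω = I φ ω * (1 - V φ ω))
    (N : List Bool → Ω → ℝ)
    (hNmeas : ∀ φ, Measurable (N φ))
    (hNiid : iIndepFun N ℙ)
    (hNlaw : ∀ φ, Measure.map (N φ) ℙ = gaussianReal 0 1)
    (hNV : IndepFun (fun ω => fun φ : List Bool => N φ ω)
      (fun ω => fun φ : List Bool => V φ ω) ℙ)
    (Z : List Bool → Ω → ℝ)
    (hZ : ∀ φ ω, Z φ ω = Real.sqrt (I φ ω - (I φ ω) ^ 2) * N φ ω) :
    ∀ᵐ ω ∂ℙ,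
      {φ : List Bool | ¬ |Z φ ω| < 2 * Real.sqrt ((φ.length : ℝ) * I φ ω)}.Finite := by
  -- the bad events
  set t : List Bool → Set Ω :=
    fun φ => {ω | max 1 (2 * Real.sqrt φ.length) ≤ |N φ ω|} with ht_def
  -- measure bound for each event
  have hμt : ∀ φ, ℙ (t φ) ≤ ENNReal.ofReal (2 * Real.exp 1 * Real.exp (-(φ.length:ℝ))) := by
    intro φ
    have hms : MeasurableSet {x : ℝ | max 1 (2 * Real.sqrt φ.length) ≤ |x|} :=
      measurableSet_le measurable_const measurable_abs
    have : t φ = N φ ⁻¹' {x : ℝ | max 1 (2 * Real.sqrt φ.length) ≤ |x|} := rfl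
    rw [this, ← Measure.map_apply (hNmeas φ) hms, hNlaw φ]
    exact tail_n φ.length
  -- Borel-Cantelli
  have hsum : ∑' φ, ℙ (t φ) ≠ ⊤ :=
    ne_top_of_le_ne_top sum_bound (ENNReal.tsum_le_tsum hμt)
  have hBC : ∀ᵐ ω ∂ℙ, {φ : List Bool | ω ∈ t φ}.Finite :=
    MeasureTheory.ae_finite_setOf_mem hsum
  -- a.s. all V values are in (0,1)
  have hV01 : ∀ᵐ ω ∂ℙ, ∀ φ, V φ ω ∈ Set.Ioo (0:ℝ) 1 := by
    rw [ae_all_iff]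
    intro φ
    rw [ae_iff]
    have hpre : {ω | ¬ V φ ω ∈ Set.Ioo (0:ℝ) 1} = V φ ⁻¹' (Set.Ioo (0:ℝ) 1)ᶜ := rfl
    rw [hpre, ← Measure.map_apply (hVmeas φ) measurableSet_Ioo.compl, hVunif φ,
      Measure.restrict_apply measurableSet_Ioo.compl]
    refine measure_mono_null (fun x hx => ?_) (Set.Finite.measure_zero
      (Set.toFinite ({0, 1} : Set ℝ)) volume)
    obtain ⟨hx1, hx2⟩ := hx
    simp only [Set.mem_compl_iff, Set.mem_Ioo, not_and_or, not_lt] at hx1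
    simp only [Set.mem_Icc] at hx2
    simp only [Set.mem_insert_iff, Set.mem_singleton_iff]
    rcases hx1 with h | h
    · exact Or.inl (le_antisymm h hx2.1)
    · exact Or.inr (le_antisymm hx2.2 h)
  -- pointwise bounds on I
  have hIrange : ∀ ω, (∀ φ, V φ ω ∈ Set.Ioo (0:ℝ) 1) → ∀ φ, I φ ω ∈ Set.Ioc (0:ℝ) 1 := by
    intro ω hω φ
    induction φ using List.reverseRecOn with
    | nil => rw [hI0 ω]; exact ⟨one_pos, le_refl 1⟩
    | append_singleton l b ih =>
      obtain ⟨hI1, hI2⟩ := ih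
      obtain ⟨hV1, hV2⟩ := hω l
      cases b with
      | false =>
        rw [hIfalse l ω]
        constructor
        · positivity
        · nlinarith
      | true =>
        rw [hItrue l ω]
        constructor
        · nlinarith
        · nlinarith
  -- combine
  filter_upwards [hBC, hV01] with ω hfin hω
  refine (hfin.insert []).subset ?_
  intro φ hφ
  simp only [Set.mem_setOf_eq] at hφ
  by_cases hnil : φ = []
  · exact Set.mem_insert_iff.mpr (Or.inl hnil)
  refine Set.mem_insert_iff.mpr (Or.inr ?_)
  -- show ω ∈ t φ
  push_neg at hφ
  set a := I φ ω with ha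
  obtain ⟨haI1, haI2⟩ := hIrange ω hω φ
  have hn1 : 1 ≤ φ.length := List.length_pos_iff.mpr hnil
  have hsqrtn : (1:ℝ) ≤ Real.sqrt φ.length := by
    rw [show (1:ℝ) = Real.sqrt 1 by rw [Real.sqrt_one]]
    exact Real.sqrt_le_sqrt (by exact_mod_cast hn1)
  have hZle : |Z φ ω| ≤ Real.sqrt a * |N φ ω| := by
    rw [hZ φ ω, abs_mul, abs_of_nonneg (Real.sqrt_nonneg _)]
    refine mul_le_mul_of_nonneg_right (Real.sqrt_le_sqrt ?_) (abs_nonneg _)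
    nlinarith
  have hsplit : 2 * Real.sqrt ((φ.length : ℝ) * a)
      = (2 * Real.sqrt φ.length) * Real.sqrt a := by
    rw [Real.sqrt_mul (Nat.cast_nonneg _)]
    ring
  have hkey : (2 * Real.sqrt φ.length) * Real.sqrt a ≤ |N φ ω| * Real.sqrt a := by
    calc (2 * Real.sqrt φ.length) * Real.sqrt a = 2 * Real.sqrt ((φ.length : ℝ) * a) :=
          hsplit.symm
      _ ≤ |Z φ ω| := hφ
      _ ≤ Real.sqrt a * |N φ ω| := hZle
      _ = |N φ ω| * Real.sqrt a := mul_comm _ _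
  have hsqa : 0 < Real.sqrt a := Real.sqrt_pos.mpr haI1
  have hNbig : 2 * Real.sqrt φ.length ≤ |N φ ω| :=
    le_of_mul_le_mul_right hkey hsqa
  show max 1 (2 * Real.sqrt φ.length) ≤ |N φ ω|
  exact max_le (by linarith) hNbig
end

section
/- Let $(Z_\phi)_{\phi\in\{0,1\}^*}$ be, conditionally on the interval lengths, jointly centered Gaussian with covariances $\mathbb{E}[Z_\phi Z_\psi\mid\mathcal{F}_\infty] = ((R_\phi\wedge R_\psi) - (L_\phi\vee L_\psi))^+ - I_\phi I_\psi$. Then the random series $\sum_{\phi\in\{0,1\}^*} Z_\phi\,\mathbf{1}_{[L_\phi,R_\phi)}$ converges uniformly on $[0,1]$ almost surely. -/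
open MeasureTheory ProbabilityTheory
open scoped ENNReal

private lemma aux_integral_prod {Ω : Type*} [MeasureSpace Ω]
    [IsProbabilityMeasure (ℙ : Measure Ω)]
    {ι : Type*} {X : ι → Ω → ℝ} (hX : iIndepFun X ℙ)
    (hm : ∀ i, Measurable (X i)) (s : Finset ι) :
    ∫ ω, ∏ i ∈ s, X i ω ∂ℙ = ∏ i ∈ s, ∫ ω, X i ω ∂ℙ := by
  induction s using Finset.cons_induction with
  | empty => simp
  | cons i s hi ih =>
    have hind : IndepFun (∏ j ∈ s, X j) (X i) ℙ :=
      hX.indepFun_finsetProd_of_notMem hm hi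
    have heq : ∫ ω, ∏ j ∈ Finset.cons i s hi, X j ω ∂ℙ
        = ∫ ω, (∏ j ∈ s, X j) ω * X i ω ∂ℙ := by
      apply integral_congr_ae
      filter_upwards with ω
      rw [Finset.prod_cons, Finset.prod_apply, mul_comm]
    have hmp : Measurable (∏ j ∈ s, X j) := by
      rw [Finset.prod_fn]
      exact Finset.measurable_prod s fun j _ => hm j
    rw [heq, hind.integral_fun_mul_eq_mul_integral hmp.aestronglyMeasurable
        (hm i).aestronglyMeasurable, Finset.prod_cons]
    have h2 : ∫ ω, (∏ j ∈ s, X j) ω ∂ℙ = ∫ ω, ∏ j ∈ s, X j ω ∂ℙ := by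
      apply integral_congr_ae
      filter_upwards with ω
      rw [Finset.prod_apply]
    rw [h2, ih, mul_comm]

/-- If, conditionally on the interval lengths of the recursive uniform splitting of
`[0,1)`, the family `(Z φ)` is jointly centred Gaussian with covariances
`E[Z_φ Z_ψ ∣ F∞] = ((R_φ ∧ R_ψ) - (L_φ ∨ L_ψ))⁺ - I_φ I_ψ` (encoded via the
conditional moment generating function of finite linear combinations), then the
random series `∑_φ Z_φ 1_{[L_φ,R_φ)}` converges uniformly on `[0,1]` almost surely. -/
theorem limit_process_series_converges_uniformly
    (Ω : Type*) [MeasureSpace Ω] [IsProbabilityMeasure (ℙ : Measure Ω)]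
    (V : List Bool → Ω → ℝ)
    (hVmeas : ∀ φ, Measurable (V φ))
    (hViid : iIndepFun V ℙ)
    (hVunif : ∀ φ, Measure.map (V φ) ℙ = volume.restrict (Set.Icc (0:ℝ) 1))
    (L R : List Bool → Ω → ℝ)
    (hL0 : ∀ ω, L [] ω = 0) (hR0 : ∀ ω, R [] ω = 1)
    (hLf : ∀ φ ω, L (φ ++ [false]) ω = L φ ω)
    (hRt : ∀ φ ω, R (φ ++ [true]) ω = R φ ω)
    (hRf : ∀ φ ω, R (φ ++ [false]) ω = L φ ω + (R φ ω - L φ ω) * V φ ω)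
    (hLt : ∀ φ ω, L (φ ++ [true]) ω = R (φ ++ [false]) ω)
    (Z : List Bool → Ω → ℝ)
    (hZmeas : ∀ φ, Measurable (Z φ))
    (F : MeasurableSpace Ω)
    (hF : F = ⨆ φ : List Bool,
      MeasurableSpace.comap (fun ω => R φ ω - L φ ω) inferInstance)
    (hFle : F ≤ MeasureSpace.toMeasurableSpace)
    (hZgauss : ∀ (s : Finset (List Bool)) (c : List Bool → ℝ),
      ℙ[fun ω => Real.exp (∑ φ ∈ s, c φ * Z φ ω) | F] =ᵐ[ℙ]
        fun ω => Real.exp ((1 / 2) * ∑ φ ∈ s, ∑ ψ ∈ s, c φ * c ψ *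
          (max (min (R φ ω) (R ψ ω) - max (L φ ω) (L ψ ω)) 0 -
            (R φ ω - L φ ω) * (R ψ ω - L ψ ω)))) :
    ∀ᵐ ω ∂ℙ, ∃ G : ℝ → ℝ,
      TendstoUniformlyOn
        (fun K : ℕ => fun α : ℝ =>
          ∑ k ∈ Finset.range (K + 1), ∑ b : Fin k → Bool,
            (if α ∈ Set.Ico (L (List.ofFn b) ω) (R (List.ofFn b) ω)
              then Z (List.ofFn b) ω else 0))
        G Filter.atTop (Set.Icc (0:ℝ) 1) := by
  classical
  -- measurability of L and R
  have hLRmeas : ∀ φ : List Bool, Measurable[MeasureSpace.toMeasurableSpace] (L φ) ∧ Measurable[MeasureSpace.toMeasurableSpace] (R φ) := by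
    intro φ
    induction φ using List.reverseRecOn with
    | nil =>
      refine ⟨?_, ?_⟩
      · have h : L [] = fun _ => (0:ℝ) := funext hL0
        rw [h]; exact measurable_const
      · have h : R [] = fun _ => (1:ℝ) := funext hR0
        rw [h]; exact measurable_const
    | append_singleton l b ih =>
      obtain ⟨hLm, hRm⟩ := ih
      have hRfm : Measurable[MeasureSpace.toMeasurableSpace] (R (l ++ [false])) := by
        have h : R (l ++ [false]) = fun ω => L l ω + (R l ω - L l ω) * V l ω :=
          funext (hRf l)
        rw [h]; exact hLm.add ((hRm.sub hLm).mul (hVmeas l))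
      cases b with
      | false =>
        refine ⟨?_, hRfm⟩
        have h : L (l ++ [false]) = L l := funext (hLf l)
        rw [h]; exact hLm
      | true =>
        constructor
        · have h : L (l ++ [true]) = R (l ++ [false]) := funext (hLt l)
          rw [h]; exact hRfm
        · have h : R (l ++ [true]) = R l := funext (hRt l)
          rw [h]; exact hRm
  have hImeas : ∀ φ : List Bool,
      Measurable[MeasureSpace.toMeasurableSpace] (fun ω => R φ ω - L φ ω) :=
    fun φ => (hLRmeas φ).2.sub (hLRmeas φ).1
  -- a.e., all the uniforms take values in [0,1]
  have hVae : ∀ᵐ ω ∂ℙ, ∀ φ : List Bool, V φ ω ∈ Set.Icc (0:ℝ) 1 := by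
    rw [MeasureTheory.ae_all_iff]
    intro φ
    rw [ae_iff]
    have hset : {ω | ¬ V φ ω ∈ Set.Icc (0:ℝ) 1} = V φ ⁻¹' (Set.Icc (0:ℝ) 1)ᶜ := rfl
    rw [hset, ← Measure.map_apply (hVmeas φ) measurableSet_Icc.compl, hVunif φ,
      Measure.restrict_apply measurableSet_Icc.compl]
    simp [Set.compl_inter_self]
  -- pointwise geometry on the good event
  have hLRle : ∀ ω, (∀ φ : List Bool, V φ ω ∈ Set.Icc (0:ℝ) 1) →
      ∀ φ, L φ ω ≤ R φ ω := by
    intro ω hω φ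
    induction φ using List.reverseRecOn with
    | nil => rw [hL0, hR0]; norm_num
    | append_singleton l b ih =>
      obtain ⟨h0, h1⟩ := hω l
      cases b with
      | false => rw [hLf, hRf]; nlinarith
      | true => rw [hLt, hRt, hRf]; nlinarith
  have hnest : ∀ ω, (∀ φ : List Bool, V φ ω ∈ Set.Icc (0:ℝ) 1) →
      ∀ (l : List Bool) (b : Bool),
        L l ω ≤ L (l ++ [b]) ω ∧ R (l ++ [b]) ω ≤ R l ω := by
    intro ω hω l b
    obtain ⟨h0, h1⟩ := hω l
    have hlr := hLRle ω hω l
    cases b with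
    | false =>
      rw [hLf, hRf]
      exact ⟨le_refl _, by nlinarith⟩
    | true =>
      rw [hLt, hRt, hRf]
      exact ⟨by nlinarith, le_refl _⟩
  have hIle1 : ∀ ω, (∀ φ : List Bool, V φ ω ∈ Set.Icc (0:ℝ) 1) →
      ∀ φ, R φ ω - L φ ω ≤ 1 := by
    intro ω hω φ
    induction φ using List.reverseRecOn with
    | nil => rw [hL0, hR0]; norm_num
    | append_singleton l b ih =>
      obtain ⟨ha, hb⟩ := hnest ω hω l b
      linarith
  -- disjointness of the intervals at a given level
  have hdisj : ∀ ω, (∀ φ : List Bool, V φ ω ∈ Set.Icc (0:ℝ) 1) →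
      ∀ (n : ℕ) (φ ψ : List Bool), φ.length = n → ψ.length = n → φ ≠ ψ →
        Disjoint (Set.Ico (L φ ω) (R φ ω)) (Set.Ico (L ψ ω) (R ψ ω)) := by
    intro ω hω n
    induction n with
    | zero =>
      intro φ ψ hφ hψ hne
      rw [List.length_eq_zero_iff] at hφ hψ
      subst hφ; subst hψ; exact absurd rfl hne
    | succ n ih =>
      intro φ ψ hφ hψ hne
      rcases List.eq_nil_or_concat φ with rfl | ⟨φ₀, a, rfl⟩
      · simp at hφ
      rcases List.eq_nil_or_concat ψ with rfl | ⟨ψ₀, c, rfl⟩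
      · simp at hψ
      rw [List.concat_eq_append] at hφ hne ⊢
      rw [List.concat_eq_append] at hψ hne ⊢
      have hφ₀ : φ₀.length = n := by simpa using hφ
      have hψ₀ : ψ₀.length = n := by simpa using hψ
      by_cases hpar : φ₀ = ψ₀
      · subst hpar
        have hac : a ≠ c := by
          rintro rfl; exact hne rfl
        cases a with
        | false =>
          cases c with
          | false => exact absurd rfl hac
          | true =>
            rw [hLt]
            exact Set.Ico_disjoint_Ico_same
        | true =>
          cases c with
          | false =>
            rw [hLt]
            exact Set.Ico_disjoint_Ico_same.symm
          | true => exact absurd rfl hac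
      · have hd := ih φ₀ ψ₀ hφ₀ hψ₀ hpar
        have s1 := hnest ω hω φ₀ a
        have s2 := hnest ω hω ψ₀ c
        exact hd.mono (Set.Ico_subset_Ico s1.1 s1.2) (Set.Ico_subset_Ico s2.1 s2.2)
  -- product formula for the interval lengths
  have hprodf : ∀ (φ : List Bool) (ω : Ω),
      R φ ω - L φ ω = ∏ j ∈ Finset.range φ.length,
        (if φ.getD j false = true then 1 - V (φ.take j) ω else V (φ.take j) ω) := by
    intro φ ω
    induction φ using List.reverseRecOn with
    | nil => simp [hL0, hR0]
    | append_singleton l b ih =>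
      have hlen : (l ++ [b]).length = l.length + 1 := by simp
      rw [hlen, Finset.prod_range_succ]
      have h1 : ∏ j ∈ Finset.range l.length,
          (if (l ++ [b]).getD j false = true then 1 - V ((l ++ [b]).take j) ω
            else V ((l ++ [b]).take j) ω)
          = ∏ j ∈ Finset.range l.length,
          (if l.getD j false = true then 1 - V (l.take j) ω else V (l.take j) ω) := by
        refine Finset.prod_congr rfl fun j hj => ?_
        have hjl : j < l.length := Finset.mem_range.1 hj
        rw [List.getD_append _ _ _ _ hjl, List.take_append_of_le_length hjl.le]
      have h2 : (l ++ [b]).getD l.length false = b := by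
        rw [List.getD_append_right _ _ _ _ le_rfl]
        simp
      have h3 : (l ++ [b]).take l.length = l := List.take_left
      rw [h1, h2, h3, ← ih]
      cases b with
      | false =>
        rw [hLf, hRf]
        simp only [Bool.false_eq_true, if_false]
        ring
      | true =>
        rw [hLt, hRt, hRf]
        simp only [if_true]
        ring
  -- second moment of the interval lengths
  have hEI2 : ∀ φ : List Bool,
      ∫ ω, (R φ ω - L φ ω)^2 ∂ℙ = ((1:ℝ)/3)^φ.length := by
    intro φ
    set g : List Bool → ℝ → ℝ :=
      fun ψ v => (if φ.getD ψ.length false = true then 1 - v else v)^2 with hg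
    have hgmeas : ∀ ψ, Measurable (g ψ) := by
      intro ψ
      rw [hg]
      by_cases hb : φ.getD ψ.length false = true
      · simp only [hb, if_true]
        exact (measurable_const.sub measurable_id).pow_const 2
      · simp only [hb, if_false]
        exact measurable_id.pow_const 2
    have hXindep : iIndepFun
        (fun ψ => g ψ ∘ V ψ) ℙ := hViid.comp _ hgmeas
    have hXint : ∀ ψ, ∫ ω, (g ψ ∘ V ψ) ω ∂ℙ = (1:ℝ)/3 := by
      intro ψ
      have hmap := integral_map (μ := ℙ) (hVmeas ψ).aemeasurable
        (hgmeas ψ).aestronglyMeasurable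
      rw [hVunif ψ] at hmap
      have hgoal : ∫ ω, (g ψ ∘ V ψ) ω ∂ℙ = ∫ ω, g ψ (V ψ ω) ∂ℙ := by
        simp only [Function.comp_apply]
      rw [hgoal, ← hmap, integral_Icc_eq_integral_Ioc,
        ← intervalIntegral.integral_of_le (by norm_num : (0:ℝ) ≤ 1)]
      rw [hg]
      by_cases hb : φ.getD ψ.length false = true
      · simp only [hb, if_true]
        have hcs : (∫ x in (0:ℝ)..1, (1 - x)^2)
            = ∫ x in (1-(1:ℝ))..(1-(0:ℝ)), x^2 :=
          intervalIntegral.integral_comp_sub_left (fun x => x^2) 1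
        rw [hcs, show (1-(1:ℝ)) = 0 by norm_num, show (1-(0:ℝ)) = 1 by norm_num,
          integral_pow]
        norm_num
      · simp only [hb, Bool.false_eq_true, if_false]
        rw [integral_pow]; norm_num
    set S : Finset (List Bool) := (Finset.range φ.length).image (fun j => φ.take j)
      with hS
    have hinj : Set.InjOn (fun j => φ.take j) (Finset.range φ.length) := by
      intro i hi j hj hij
      have hi' : i < φ.length := by simpa using hi
      have hj' : j < φ.length := by simpa using hj
      have := congrArg List.length hij
      simpa [List.length_take, Nat.min_eq_left hi'.le, Nat.min_eq_left hj'.le]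
        using this
    have key : ∀ ω, (R φ ω - L φ ω)^2 = ∏ ψ ∈ S, (g ψ ∘ V ψ) ω := by
      intro ω
      rw [hS, Finset.prod_image hinj, hprodf φ ω, ← Finset.prod_pow]
      refine Finset.prod_congr rfl fun j hj => ?_
      have hj' : j < φ.length := Finset.mem_range.1 hj
      have hlt : (φ.take j).length = j := by
        rw [List.length_take]; exact Nat.min_eq_left hj'.le
      simp only [hg, Function.comp_apply, hlt]
    have hfun : (fun ω => (R φ ω - L φ ω)^2) = fun ω => ∏ ψ ∈ S, (g ψ ∘ V ψ) ω :=
      funext key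
    rw [hfun, aux_integral_prod hXindep (fun ψ => (hgmeas ψ).comp (hVmeas ψ)) S]
    rw [Finset.prod_congr rfl fun ψ _ => hXint ψ, Finset.prod_const]
    congr 1
    rw [hS, Finset.card_image_of_injOn hinj, Finset.card_range]
  -- Markov bound on the interval lengths
  have hMark : ∀ φ : List Bool,
      ℙ {ω | ((5:ℝ)/6)^φ.length < R φ ω - L φ ω}
        ≤ ENNReal.ofReal (((12:ℝ)/25)^φ.length) := by
    intro φ
    have hIint : Integrable (fun ω => (R φ ω - L φ ω)^2) ℙ := by
      refine Integrable.mono' (integrable_const (1:ℝ))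
        ((hImeas φ).pow_const 2).aestronglyMeasurable ?_
      filter_upwards [hVae] with ω hω
      have h1 := hLRle ω hω φ
      have h2 := hIle1 ω hω φ
      rw [Real.norm_eq_abs, abs_of_nonneg (sq_nonneg _)]
      nlinarith
    have hmar := mul_meas_ge_le_integral_of_nonneg (μ := ℙ)
      (ae_of_all _ fun ω => sq_nonneg (R φ ω - L φ ω)) hIint ((((5:ℝ)/6)^φ.length)^2)
    rw [hEI2 φ] at hmar
    have hsub : {ω | ((5:ℝ)/6)^φ.length < R φ ω - L φ ω}
        ⊆ {ω | (((5:ℝ)/6)^φ.length)^2 ≤ (R φ ω - L φ ω)^2} := by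
      intro ω h
      have h5 : (0:ℝ) ≤ ((5:ℝ)/6)^φ.length := by positivity
      exact pow_le_pow_left₀ h5 (le_of_lt h) 2
    have hε2 : (0:ℝ) < (((5:ℝ)/6)^φ.length)^2 := by positivity
    have hto : (ℙ {ω | ((5:ℝ)/6)^φ.length < R φ ω - L φ ω}).toReal
        ≤ ((1:ℝ)/3)^φ.length / ((((5:ℝ)/6)^φ.length)^2) := by
      rw [le_div_iff₀ hε2]
      calc (ℙ {ω | ((5:ℝ)/6)^φ.length < R φ ω - L φ ω}).toReal * (((5:ℝ)/6)^φ.length)^2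
          ≤ (ℙ {ω | (((5:ℝ)/6)^φ.length)^2 ≤ (R φ ω - L φ ω)^2}).toReal
              * (((5:ℝ)/6)^φ.length)^2 := by
            exact mul_le_mul_of_nonneg_right
              (ENNReal.toReal_mono (measure_ne_top _ _) (measure_mono hsub)) hε2.le
        _ ≤ ((1:ℝ)/3)^φ.length := by rw [measureReal_def] at hmar; nlinarith [hmar]
    have hdiv : ((1:ℝ)/3)^φ.length / ((((5:ℝ)/6)^φ.length)^2) = ((12:ℝ)/25)^φ.length := by
      rw [pow_right_comm, show ((5:ℝ)/6)^2 = 25/36 by norm_num, ← div_pow]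
      norm_num
    rw [hdiv] at hto
    exact (ENNReal.le_ofReal_iff_toReal_le (measure_ne_top _ _) (by positivity)).2 hto
  -- conditional Chernoff bound
  have hchern : ∀ (φ : List Bool) (c t ε : ℝ), 0 ≤ ε →
      ℙ ({ω | t ≤ c * Z φ ω} ∩ {ω | R φ ω - L φ ω ≤ ε})
        ≤ ENNReal.ofReal (Real.exp (c^2 * ε / 2 - t)) := by
    intro φ c t ε hε
    set S : Set Ω := {ω | R φ ω - L φ ω ≤ ε} with hSdef
    have hSm : MeasurableSet[MeasureSpace.toMeasurableSpace] S :=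
      measurableSet_le (hImeas φ) measurable_const
    have hSF : MeasurableSet[F] S := by
      rw [hF]
      have hle : MeasurableSpace.comap (fun ω => R φ ω - L φ ω) inferInstance
          ≤ ⨆ ψ : List Bool, MeasurableSpace.comap (fun ω => R ψ ω - L ψ ω)
            inferInstance :=
        le_iSup (fun ψ : List Bool => MeasurableSpace.comap
          (fun ω => R ψ ω - L ψ ω) (inferInstance : MeasurableSpace ℝ)) φ
      exact hle _ ⟨Set.Iic ε, measurableSet_Iic, rfl⟩
    have h1 := hZgauss {φ} (fun _ => c)
    simp only [Finset.sum_singleton, min_self, max_self] at h1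
    have hexpint : Integrable (fun ω => Real.exp (c * Z φ ω)) ℙ := by
      by_contra hcon
      rw [condExp_of_not_integrable hcon] at h1
      have hne : (MeasureTheory.ae (@volume Ω _)).NeBot :=
        ae_neBot.2 (IsProbabilityMeasure.ne_zero _)
      obtain ⟨ω, hω⟩ := h1.exists
      simp only [Pi.zero_apply] at hω
      exact (Real.exp_pos _).ne' hω.symm
    have hmar := mul_meas_ge_le_integral_of_nonneg (μ := Measure.restrict ℙ S)
      (ae_of_all _ fun ω => (Real.exp_pos (c * Z φ ω)).le) hexpint.restrict (Real.exp t)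
    have hP1 : ℙ ({ω | t ≤ c * Z φ ω} ∩ S)
        ≤ (Measure.restrict ℙ S) {x | Real.exp t ≤ Real.exp (c * Z φ x)} := by
      rw [Measure.restrict_apply' hSm]
      refine measure_mono (Set.inter_subset_inter_left _ ?_)
      intro ω h
      exact Real.exp_le_exp.2 h
    have hint2 : ∫ x in S, Real.exp (c * Z φ x) ∂ℙ ≤ Real.exp (c^2 * ε / 2) := by
      rw [← setIntegral_condExp hFle hexpint hSF]
      have hb : ∀ᵐ ω ∂(Measure.restrict ℙ S),
          (ℙ[fun ω => Real.exp (c * Z φ ω)|F]) ω ≤ Real.exp (c^2 * ε / 2) := by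
        filter_upwards [ae_restrict_of_ae h1, ae_restrict_mem hSm] with ω h hmem
        rw [h]
        apply Real.exp_le_exp.2
        have hIε : R φ ω - L φ ω ≤ ε := hmem
        have hM : max (R φ ω - L φ ω) 0 ≤ ε := max_le hIε hε
        nlinarith [mul_nonneg (sq_nonneg c) (sub_nonneg.2 hM),
          mul_nonneg (sq_nonneg c) (mul_self_nonneg (R φ ω - L φ ω))]
      calc ∫ x in S, (ℙ[fun ω => Real.exp (c * Z φ ω)|F]) x ∂ℙ
          ≤ ∫ _ in S, Real.exp (c^2 * ε / 2) ∂ℙ :=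
            integral_mono_ae integrable_condExp.restrict (integrable_const _) hb
        _ ≤ ∫ _, Real.exp (c^2 * ε / 2) ∂ℙ :=
            integral_mono_measure Measure.restrict_le_self
              (ae_of_all _ fun _ => (Real.exp_pos _).le) (integrable_const _)
        _ = Real.exp (c^2 * ε / 2) := by simp
      -- end
    have hfin : (ℙ ({ω | t ≤ c * Z φ ω} ∩ S)).toReal ≤ Real.exp (c^2 * ε / 2 - t) := by
      have h3 : Real.exp t * (ℙ ({ω | t ≤ c * Z φ ω} ∩ S)).toReal
          ≤ Real.exp (c^2 * ε / 2) := by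
        have hm1 : (ℙ ({ω | t ≤ c * Z φ ω} ∩ S)).toReal
            ≤ ((Measure.restrict ℙ S) {x | Real.exp t ≤ Real.exp (c * Z φ x)}).toReal :=
          ENNReal.toReal_mono (measure_ne_top _ _) hP1
        rw [measureReal_def] at hmar
        nlinarith [hmar, hint2, Real.exp_pos t]
      rw [Real.exp_sub, le_div_iff₀ (Real.exp_pos t)]
      nlinarith [h3]
    exact (ENNReal.le_ofReal_iff_toReal_le (measure_ne_top _ _) (Real.exp_pos _).le).2 hfin
  -- the bad events at each level have summable probability
  have hAk : ∀ k : ℕ,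
      ℙ {ω | ∃ b : Fin k → Bool,
          2 * Real.sqrt ((k:ℝ) * ((5:ℝ)/6)^k) < |Z (List.ofFn b) ω|}
        ≤ ENNReal.ofReal ((2:ℝ)^k * (2 * Real.exp (-(2*(k:ℝ))) + ((12:ℝ)/25)^k)) := by
    intro k
    set t : ℝ := 2 * Real.sqrt ((k:ℝ) * ((5:ℝ)/6)^k) with ht
    set ε : ℝ := ((5:ℝ)/6)^k with hεdef
    have hε0 : 0 < ε := by rw [hεdef]; positivity
    have ht0 : 0 ≤ t := by rw [ht]; positivity
    have ht2 : t^2 = 4 * ((k:ℝ) * ε) := by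
      rw [ht, hεdef, mul_pow, Real.sq_sqrt (by positivity)]
      ring
    set c : ℝ := t / ε with hc
    have hc0 : 0 ≤ c := div_nonneg ht0 hε0.le
    have hexp : c^2 * ε / 2 - c * t = -(2*(k:ℝ)) := by
      have h4 : c^2 * ε / 2 - c * t = -(t^2 / (2*ε)) := by
        rw [hc]; field_simp; ring
      rw [h4, ht2]
      field_simp
      ring
    have hcov : ∀ b : Fin k → Bool,
        {ω | t < |Z (List.ofFn b) ω|} ⊆
          ({ω | c * t ≤ c * Z (List.ofFn b) ω}
            ∩ {ω | R (List.ofFn b) ω - L (List.ofFn b) ω ≤ ε})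
          ∪ (({ω | c * t ≤ -c * Z (List.ofFn b) ω}
            ∩ {ω | R (List.ofFn b) ω - L (List.ofFn b) ω ≤ ε})
          ∪ {ω | ε < R (List.ofFn b) ω - L (List.ofFn b) ω}) := by
      intro b ω hω
      simp only [Set.mem_setOf_eq] at hω
      rcases le_or_gt (R (List.ofFn b) ω - L (List.ofFn b) ω) ε with hI | hI
      · rcases lt_abs.1 hω with h | h
        · exact Or.inl ⟨mul_le_mul_of_nonneg_left h.le hc0, hI⟩
        · refine Or.inr (Or.inl ⟨?_, hI⟩)
          have h2 := mul_le_mul_of_nonneg_left h.le hc0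
          show c * t ≤ -c * Z (List.ofFn b) ω
          nlinarith [h2]
      · exact Or.inr (Or.inr hI)
    have hperb : ∀ b : Fin k → Bool,
        ℙ {ω | t < |Z (List.ofFn b) ω|}
          ≤ ENNReal.ofReal (2 * Real.exp (-(2*(k:ℝ))) + ((12:ℝ)/25)^k) := by
      intro b
      have hch1 := hchern (List.ofFn b) c (c * t) ε hε0.le
      have hch2 := hchern (List.ofFn b) (-c) (c * t) ε hε0.le
      have hm3 := hMark (List.ofFn b)
      rw [List.length_ofFn] at hm3
      have hexp1 : c^2 * ε / 2 - c * t = -(2*(k:ℝ)) := hexp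
      have hexp2 : (-c)^2 * ε / 2 - c * t = -(2*(k:ℝ)) := by rw [neg_pow]; simpa using hexp
      calc ℙ {ω | t < |Z (List.ofFn b) ω|}
          ≤ ℙ (({ω | c * t ≤ c * Z (List.ofFn b) ω}
              ∩ {ω | R (List.ofFn b) ω - L (List.ofFn b) ω ≤ ε})
            ∪ (({ω | c * t ≤ -c * Z (List.ofFn b) ω}
              ∩ {ω | R (List.ofFn b) ω - L (List.ofFn b) ω ≤ ε})
            ∪ {ω | ε < R (List.ofFn b) ω - L (List.ofFn b) ω})) :=
            measure_mono (hcov b)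
        _ ≤ ℙ ({ω | c * t ≤ c * Z (List.ofFn b) ω}
              ∩ {ω | R (List.ofFn b) ω - L (List.ofFn b) ω ≤ ε})
            + (ℙ ({ω | c * t ≤ -c * Z (List.ofFn b) ω}
              ∩ {ω | R (List.ofFn b) ω - L (List.ofFn b) ω ≤ ε})
            + ℙ {ω | ε < R (List.ofFn b) ω - L (List.ofFn b) ω}) :=
            le_trans (measure_union_le _ _) (by gcongr; exact measure_union_le _ _)
        _ ≤ ENNReal.ofReal (Real.exp (-(2*(k:ℝ))))
            + (ENNReal.ofReal (Real.exp (-(2*(k:ℝ)))) + ENNReal.ofReal (((12:ℝ)/25)^k)) := by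
            refine add_le_add (by rw [← hexp1]; exact hch1) (add_le_add ?_ hm3)
            rw [← hexp2, show {ω | c * t ≤ -c * Z (List.ofFn b) ω}
              = {ω | c * t ≤ (-c) * Z (List.ofFn b) ω} from by norm_num]
            exact hch2
        _ = ENNReal.ofReal (2 * Real.exp (-(2*(k:ℝ))) + ((12:ℝ)/25)^k) := by
            rw [← ENNReal.ofReal_add (by positivity) (by positivity),
              ← ENNReal.ofReal_add (by positivity) (by positivity)]
            ring_nf
    calc ℙ {ω | ∃ b : Fin k → Bool, t < |Z (List.ofFn b) ω|}
        = ℙ (⋃ b : Fin k → Bool, {ω | t < |Z (List.ofFn b) ω|}) := by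
          rw [Set.setOf_exists]
      _ ≤ ∑ b : Fin k → Bool, ℙ {ω | t < |Z (List.ofFn b) ω|} :=
          measure_iUnion_fintype_le _ _
      _ ≤ ∑ _b : Fin k → Bool,
            ENNReal.ofReal (2 * Real.exp (-(2*(k:ℝ))) + ((12:ℝ)/25)^k) :=
          Finset.sum_le_sum fun b _ => hperb b
      _ = ENNReal.ofReal ((2:ℝ)^k * (2 * Real.exp (-(2*(k:ℝ))) + ((12:ℝ)/25)^k)) := by
          rw [Finset.sum_const, Finset.card_univ]
          have hcard : Fintype.card (Fin k → Bool) = 2^k := by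
            simp [Fintype.card_fun]
          rw [hcard, nsmul_eq_mul]
          rw [← ENNReal.ofReal_natCast (2^k), ← ENNReal.ofReal_mul (by positivity)]
          norm_num
  -- Borel-Cantelli
  have hfreq : ℙ {ω | ∃ᶠ k in Filter.atTop, ∃ b : Fin k → Bool,
      2 * Real.sqrt ((k:ℝ) * ((5:ℝ)/6)^k) < |Z (List.ofFn b) ω|} = 0 := by
    apply measure_setOf_frequently_eq_zero
    have hsummable : Summable
        (fun k : ℕ => (2:ℝ)^k * (2 * Real.exp (-(2*(k:ℝ))) + ((12:ℝ)/25)^k)) := by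
      have hfe : (fun k : ℕ => (2:ℝ)^k * (2 * Real.exp (-(2*(k:ℝ))) + ((12:ℝ)/25)^k))
          = fun k : ℕ => 2 * (2 * Real.exp (-2))^k + ((24:ℝ)/25)^k := by
        funext k
        rw [show (-(2*(k:ℝ))) = (k:ℝ) * (-2) by ring, Real.exp_nat_mul]
        rw [mul_add]
        congr 1
        · rw [mul_pow]; ring
        · rw [← mul_pow]; norm_num
      rw [hfe]
      have hlt : 2 * Real.exp (-2) < 1 := by
        have h3 : (3:ℝ) ≤ Real.exp 2 := by
          have := Real.add_one_le_exp (2:ℝ); linarith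
        have hpos := Real.exp_pos (2:ℝ)
        rw [Real.exp_neg, ← div_eq_mul_inv, div_lt_one hpos]
        linarith
      exact ((summable_geometric_of_lt_one (by positivity) hlt).mul_left 2).add
        (summable_geometric_of_lt_one (by norm_num) (by norm_num))
    refine ne_of_lt (lt_of_le_of_lt (ENNReal.tsum_le_tsum fun k => hAk k) ?_)
    rw [← ENNReal.ofReal_tsum_of_nonneg (fun k => by positivity) hsummable]
    exact ENNReal.ofReal_lt_top
  -- summability of the level bounds
  have hsqrtpow : ∀ (x : ℝ), 0 ≤ x → ∀ n : ℕ, Real.sqrt (x^n) = (Real.sqrt x)^n := by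
    intro x hx n
    induction n with
    | zero => simp
    | succ n ih => rw [pow_succ, Real.sqrt_mul (pow_nonneg hx n), ih, pow_succ]
  have httsum : Summable (fun k : ℕ => 2 * Real.sqrt ((k:ℝ) * ((5:ℝ)/6)^k)) := by
    have hrlt : ‖Real.sqrt ((5:ℝ)/6)‖ < 1 := by
      rw [Real.norm_eq_abs, abs_of_nonneg (Real.sqrt_nonneg _)]
      calc Real.sqrt ((5:ℝ)/6) < Real.sqrt 1 := Real.sqrt_lt_sqrt (by norm_num) (by norm_num)
        _ = 1 := Real.sqrt_one
    have hmaj := (summable_pow_mul_geometric_of_norm_lt_one 1 hrlt).mul_left 2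
    refine Summable.of_nonneg_of_le (fun k => by positivity) (fun k => ?_) hmaj
    rw [Real.sqrt_mul (Nat.cast_nonneg k), hsqrtpow ((5:ℝ)/6) (by norm_num) k]
    have hsk : Real.sqrt (k:ℝ) ≤ (k:ℝ) := by
      rcases Nat.eq_zero_or_pos k with hk | hk
      · subst hk; simp
      · have h1 : (1:ℝ) ≤ (k:ℝ) := Nat.one_le_cast.2 hk
        nlinarith [Real.sq_sqrt (by positivity : (0:ℝ) ≤ (k:ℝ)),
          Real.sqrt_nonneg (k:ℝ)]
    have hpow : (0:ℝ) ≤ Real.sqrt ((5:ℝ)/6) ^ k := by positivity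
    calc 2 * (Real.sqrt (k:ℝ) * Real.sqrt ((5:ℝ)/6) ^ k)
        ≤ 2 * ((k:ℝ) * Real.sqrt ((5:ℝ)/6) ^ k) := by nlinarith
      _ = 2 * ((k:ℝ)^1 * Real.sqrt ((5:ℝ)/6) ^ k) := by ring
  -- final assembly
  have hae2 : ∀ᵐ ω ∂ℙ, ¬ (∃ᶠ k in Filter.atTop, ∃ b : Fin k → Bool,
      2 * Real.sqrt ((k:ℝ) * ((5:ℝ)/6)^k) < |Z (List.ofFn b) ω|) := by
    rw [ae_iff]
    simp only [not_not]
    exact hfreq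
  filter_upwards [hVae, hae2] with ω hωV hωF
  rw [Filter.not_frequently] at hωF
  obtain ⟨N, hN⟩ := Filter.eventually_atTop.1 hωF
  have hNbd : ∀ n, N ≤ n → ∀ b : Fin n → Bool,
      |Z (List.ofFn b) ω| ≤ 2 * Real.sqrt ((n:ℝ) * ((5:ℝ)/6)^n) := by
    intro n hn b
    by_contra hcon
    push_neg at hcon
    exact hN n hn ⟨b, hcon⟩
  set f : ℕ → ℝ → ℝ := fun k α => ∑ b : Fin k → Bool,
      (if α ∈ Set.Ico (L (List.ofFn b) ω) (R (List.ofFn b) ω)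
        then Z (List.ofFn b) ω else 0) with hf
  set u : ℕ → ℝ := fun k => if k < N then ∑ b : Fin k → Bool, |Z (List.ofFn b) ω|
      else 2 * Real.sqrt ((k:ℝ) * ((5:ℝ)/6)^k) with hu
  have husum : Summable u := by
    have h1 : ∀ k, u (k + N) = 2 * Real.sqrt (((k+N:ℕ):ℝ) * ((5:ℝ)/6)^(k+N)) := by
      intro k
      rw [hu]
      simp only [if_neg (by omega : ¬ (k + N < N))]
    refine (summable_nat_add_iff N).1 ?_
    refine (((summable_nat_add_iff N).2 httsum).congr fun k => ?_)
    rw [h1 k]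
  have hbd : ∀ (n : ℕ) (α : ℝ), α ∈ Set.Icc (0:ℝ) 1 → ‖f n α‖ ≤ u n := by
    intro n α _
    by_cases hn : n < N
    · rw [hu]
      simp only [if_pos hn]
      refine (norm_sum_le _ _).trans (Finset.sum_le_sum fun b _ => ?_)
      rw [Real.norm_eq_abs]
      split_ifs with h
      · exact le_refl _
      · simp [abs_nonneg]
    · rw [hu]
      simp only [if_neg hn]
      push_neg at hn
      have hZb := hNbd n hn
      have hsumf : f n α = ∑ b ∈ Finset.univ.filter
          (fun b : Fin n → Bool => α ∈ Set.Ico (L (List.ofFn b) ω) (R (List.ofFn b) ω)),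
          Z (List.ofFn b) ω := by
        rw [hf, Finset.sum_filter]
      rcases Finset.eq_empty_or_nonempty (Finset.univ.filter
          (fun b : Fin n → Bool => α ∈ Set.Ico (L (List.ofFn b) ω) (R (List.ofFn b) ω)))
        with he | ⟨b0, hb0⟩
      · rw [hsumf, he, Finset.sum_empty, norm_zero]
        positivity
      · have hsub : Finset.univ.filter
            (fun b : Fin n → Bool => α ∈ Set.Ico (L (List.ofFn b) ω) (R (List.ofFn b) ω))
            ⊆ {b0} := by
          intro b hb
          simp only [Finset.mem_filter, Finset.mem_univ, true_and] at hb
          have hb0' : α ∈ Set.Ico (L (List.ofFn b0) ω) (R (List.ofFn b0) ω) := by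
            simpa using (Finset.mem_filter.1 hb0).2
          rw [Finset.mem_singleton]
          by_contra hne
          have hdis := hdisj ω hωV n (List.ofFn b) (List.ofFn b0)
            (List.length_ofFn (f := b)) (List.length_ofFn (f := b0))
            (fun h => hne (List.ofFn_inj.1 h))
          exact Set.disjoint_left.1 hdis hb hb0'
        calc ‖f n α‖ ≤ ∑ b ∈ Finset.univ.filter
              (fun b : Fin n → Bool =>
                α ∈ Set.Ico (L (List.ofFn b) ω) (R (List.ofFn b) ω)),
              |Z (List.ofFn b) ω| := by
              rw [hsumf]
              simpa [Real.norm_eq_abs] using Finset.abs_sum_le_sum_abs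
                (fun b : Fin n → Bool => Z (List.ofFn b) ω) _
          _ ≤ ∑ b ∈ ({b0} : Finset (Fin n → Bool)), |Z (List.ofFn b) ω| :=
              Finset.sum_le_sum_of_subset_of_nonneg hsub fun _ _ _ => abs_nonneg _
          _ = |Z (List.ofFn b0) ω| := Finset.sum_singleton _ _
          _ ≤ 2 * Real.sqrt ((n:ℝ) * ((5:ℝ)/6)^n) := hZb b0
  have main := tendstoUniformlyOn_tsum_nat husum hbd
  exact ⟨fun α => ∑' k, f k α,
    fun v hv => (Filter.tendsto_add_atTop_nat 1).eventually (main v hv)⟩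
end

section
/- Define on $[0,1]$ the random pseudometric $d_G(\alpha,\beta)^2 = \sum_{k>J}\big[(I_{\alpha,k}+I_{\beta,k})(2(k-J)-1)\big] - \big(\sum_{k>J}(I_{\alpha,k}-I_{\beta,k})\big)^2$ with $J = J(\alpha,\beta)$. Then almost surely $d_G(\alpha,\beta)^2 \ge \sum_{k>J} 2(2(k-J)-1)\,(I_{\alpha,k}\wedge I_{\beta,k}) > 0$ for $\alpha\ne\beta$, and the metrics $d_G$ and $d_2(\alpha,\beta)=2^{-J(\alpha,\beta)}$ induce the same topology on $[0,1]$ (i.e. are equivalent). -/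
open MeasureTheory ProbabilityTheory
open scoped ENNReal

namespace DGAux
def factor (b : Bool) (x : ℝ) : ℝ := if b then 1 - x else x

lemma measurable_factor (b : Bool) : Measurable (factor b) := by
  cases b
  · rw [show factor false = id from funext fun x => by simp [factor]]; exact measurable_id
  · rw [show factor true = fun x => 1 - x from funext fun x => by simp [factor]]
    exact measurable_const.sub measurable_id

variable {Ω : Type*} [MeasureSpace Ω] [IsProbabilityMeasure (ℙ : Measure Ω)]
  (V L R : List Bool → Ω → ℝ)

lemma len_append
    (hLf : ∀ φ ω, L (φ ++ [false]) ω = L φ ω)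
    (hRt : ∀ φ ω, R (φ ++ [true]) ω = R φ ω)
    (hRf : ∀ φ ω, R (φ ++ [false]) ω = L φ ω + (R φ ω - L φ ω) * V φ ω)
    (hLt : ∀ φ ω, L (φ ++ [true]) ω = R (φ ++ [false]) ω)
    (φ : List Bool) (b : Bool) (ω : Ω) :
    R (φ ++ [b]) ω - L (φ ++ [b]) ω = (R φ ω - L φ ω) * factor b (V φ ω) := by
  cases b
  · rw [hLf, hRf]; simp [factor]
  · rw [hRt, hLt, hRf]; simp [factor]; ring

lemma len_prod
    (hL0 : ∀ ω, L [] ω = 0) (hR0 : ∀ ω, R [] ω = 1)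
    (hLf : ∀ φ ω, L (φ ++ [false]) ω = L φ ω)
    (hRt : ∀ φ ω, R (φ ++ [true]) ω = R φ ω)
    (hRf : ∀ φ ω, R (φ ++ [false]) ω = L φ ω + (R φ ω - L φ ω) * V φ ω)
    (hLt : ∀ φ ω, L (φ ++ [true]) ω = R (φ ++ [false]) ω)
    (φ : List Bool) (ω : Ω) :
    R φ ω - L φ ω
      = ∏ i ∈ Finset.range φ.length, factor (φ.getD i false) (V (φ.take i) ω) := by
  induction φ using List.reverseRecOn with
  | nil => simp [hL0, hR0]
  | append_singleton φ b ih =>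
    rw [len_append V L R hLf hRt hRf hLt, ih]
    rw [List.length_append, List.length_singleton, Finset.prod_range_succ]
    congr 1
    · apply Finset.prod_congr rfl
      intro i hi
      rw [Finset.mem_range] at hi
      rw [List.getD_append _ _ _ _ hi, List.take_append_of_le_length (le_of_lt hi)]
    · rw [List.take_append_of_le_length le_rfl, List.take_length]
      congr 1
      simp [List.getD_append_right, List.getD]

section
variable (hVmeas : ∀ φ, Measurable (V φ))
    (hL0 : ∀ ω, L [] ω = 0) (hR0 : ∀ ω, R [] ω = 1)
    (hLf : ∀ φ ω, L (φ ++ [false]) ω = L φ ω)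
    (hRt : ∀ φ ω, R (φ ++ [true]) ω = R φ ω)
    (hRf : ∀ φ ω, R (φ ++ [false]) ω = L φ ω + (R φ ω - L φ ω) * V φ ω)
    (hLt : ∀ φ ω, L (φ ++ [true]) ω = R (φ ++ [false]) ω)

include hVmeas hL0 hR0 hLf hRt hRf hLt

lemma measurable_len (φ : List Bool) : Measurable (fun ω => R φ ω - L φ ω) := by
  have : (fun ω => R φ ω - L φ ω)
      = fun ω => ∏ i ∈ Finset.range φ.length, factor (φ.getD i false) (V (φ.take i) ω) := by
    funext ω; exact len_prod V L R hL0 hR0 hLf hRt hRf hLt φ ω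
  rw [this]
  exact Finset.measurable_prod _ fun i _ => (measurable_factor _).comp (hVmeas _)

omit hVmeas

lemma len_pos_of_good {ω : Ω} (hg : ∀ φ, V φ ω ∈ Set.Ioo (0:ℝ) 1) (φ : List Bool) :
    0 < R φ ω - L φ ω := by
  induction φ using List.reverseRecOn with
  | nil => simp [hL0, hR0]
  | append_singleton φ b ih =>
    rw [len_append V L R hLf hRt hRf hLt]
    apply mul_pos ih
    obtain ⟨h1, h2⟩ := hg φ
    cases b <;> simp [factor] <;> linarith

lemma len_le_one_of_good {ω : Ω} (hg : ∀ φ, V φ ω ∈ Set.Ioo (0:ℝ) 1) (φ : List Bool) :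
    R φ ω - L φ ω ≤ 1 := by
  induction φ using List.reverseRecOn with
  | nil => simp [hL0, hR0]
  | append_singleton φ b ih =>
    rw [len_append V L R hLf hRt hRf hLt]
    obtain ⟨h1, h2⟩ := hg φ
    have hfac : factor b (V φ ω) ≤ 1 := by cases b <;> simp [factor] <;> linarith
    have hfnn : 0 ≤ factor b (V φ ω) := by cases b <;> simp [factor] <;> linarith
    have hlp := len_pos_of_good V L R hL0 hR0 hLf hRt hRf hLt hg φ
    nlinarith

end
lemma indep_lensq_V
    (hVmeas : ∀ φ, Measurable (V φ))
    (hViid : iIndepFun V ℙ)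
    (hlen : ∀ φ ω, R φ ω - L φ ω
      = ∏ i ∈ Finset.range φ.length, factor (φ.getD i false) (V (φ.take i) ω))
    (φ : List Bool) :
    IndepFun (fun ω => (R φ ω - L φ ω) ^ 2) (V φ) ℙ := by
  classical
  set S : Finset (List Bool) := Finset.image (fun i => φ.take i) (Finset.range φ.length) with hS
  have hdisj : Disjoint S ({φ} : Finset (List Bool)) := by
    rw [Finset.disjoint_singleton_right]
    intro hmem
    rw [hS, Finset.mem_image] at hmem
    obtain ⟨i, hi, hEq⟩ := hmem
    rw [Finset.mem_range] at hi
    have := congrArg List.length hEq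
    simp only [List.length_take] at this
    omega
  have hbase := hViid.indepFun_finset S {φ} hdisj hVmeas
  set g : ((i : S) → ℝ) → ℝ := fun x =>
    (∏ i ∈ (Finset.range φ.length).attach,
      factor (φ.getD i.1 false)
        (x ⟨φ.take i.1, Finset.mem_image_of_mem _ i.2⟩)) ^ 2 with hg
  set e : ((i : ({φ} : Finset (List Bool))) → ℝ) → ℝ :=
    fun y => y ⟨φ, Finset.mem_singleton_self φ⟩ with he
  have hgm : Measurable g := by
    apply Measurable.pow_const
    apply Finset.measurable_prod
    intro i _
    have : Measurable (factor (φ.getD i.1 false)) := by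
      cases (φ.getD i.1 false)
      · rw [show factor false = id from funext fun x => by simp [factor]]; exact measurable_id
      · rw [show factor true = fun x => 1 - x from funext fun x => by simp [factor]]
        exact measurable_const.sub measurable_id
    exact this.comp (measurable_pi_apply _)
  have hem : Measurable e := measurable_pi_apply _
  have := hbase.comp hgm hem
  convert this using 1
  funext ω
  rw [hlen φ ω, hg]
  rw [← Finset.prod_attach (Finset.range φ.length)
    (fun i => factor (φ.getD i false) (V (φ.take i) ω))]
  rfl
  rfl

lemma ae_good
    (hVmeas : ∀ φ, Measurable (V φ))
    (hVunif : ∀ φ, Measure.map (V φ) ℙ = volume.restrict (Set.Icc (0:ℝ) 1)) :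
    ∀ᵐ ω ∂(ℙ : Measure Ω), ∀ φ, V φ ω ∈ Set.Ioo (0:ℝ) 1 := by
  rw [MeasureTheory.ae_all_iff]
  intro φ
  have h1 : (ℙ : Measure Ω) (V φ ⁻¹' (Set.Ioo (0:ℝ) 1)) = 1 := by
    rw [← Measure.map_apply (hVmeas φ) measurableSet_Ioo, hVunif φ,
      Measure.restrict_apply measurableSet_Ioo]
    rw [Set.inter_eq_self_of_subset_left Set.Ioo_subset_Icc_self, Real.volume_Ioo]
    norm_num
  have hms : MeasurableSet (V φ ⁻¹' (Set.Ioo (0:ℝ) 1)) := (hVmeas φ) measurableSet_Ioo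
  rw [MeasureTheory.ae_iff]
  have := (MeasureTheory.prob_compl_eq_zero_iff hms).2 h1
  simpa [Set.preimage, Set.compl_setOf] using this

lemma integral_g_V
    (hVmeas : ∀ φ, Measurable (V φ))
    (hVunif : ∀ φ, Measure.map (V φ) ℙ = volume.restrict (Set.Icc (0:ℝ) 1))
    (φ : List Bool) :
    ∫ ω, ((V φ ω) ^ 2 + (1 - V φ ω) ^ 2) ∂(ℙ : Measure Ω) = 2 / 3 := by
  have hm : Measurable (fun x : ℝ => x ^ 2 + (1 - x) ^ 2) := by fun_prop
  rw [← integral_map (hVmeas φ).aemeasurable hm.aestronglyMeasurable, hVunif φ]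
  rw [MeasureTheory.integral_Icc_eq_integral_Ioc, ← intervalIntegral.integral_of_le (by norm_num : (0:ℝ) ≤ 1)]
  have : ∀ x : ℝ, x ^ 2 + (1 - x) ^ 2 = 2 * x ^ 2 - 2 * x + 1 := by intro x; ring
  simp_rw [this]
  have c1 : IntervalIntegrable (fun x : ℝ => 2 * x ^ 2) volume 0 1 :=
    (by continuity : Continuous fun x : ℝ => 2 * x ^ 2).intervalIntegrable _ _
  have c2 : IntervalIntegrable (fun x : ℝ => 2 * x) volume 0 1 :=
    (by continuity : Continuous fun x : ℝ => 2 * x).intervalIntegrable _ _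
  rw [intervalIntegral.integral_add (c1.sub c2) intervalIntegrable_const,
    intervalIntegral.integral_sub c1 c2, intervalIntegral.integral_const_mul,
    intervalIntegral.integral_const_mul, integral_pow, integral_id,
    intervalIntegral.integral_const]
  norm_num

section prob
variable (hVmeas : ∀ φ, Measurable (V φ))
    (hViid : iIndepFun V ℙ)
    (hVunif : ∀ φ, Measure.map (V φ) ℙ = volume.restrict (Set.Icc (0:ℝ) 1))
    (hlen : ∀ φ ω, R φ ω - L φ ω
      = ∏ i ∈ Finset.range φ.length, factor (φ.getD i false) (V (φ.take i) ω))
    (hgood : ∀ᵐ ω ∂(ℙ : Measure Ω), ∀ φ, 0 < R φ ω - L φ ω ∧ R φ ω - L φ ω ≤ 1)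
    (hgoodV : ∀ᵐ ω ∂(ℙ : Measure Ω), ∀ φ, V φ ω ∈ Set.Ioo (0:ℝ) 1)

include hVmeas hlen

lemma measurable_len' (φ : List Bool) : Measurable (fun ω => R φ ω - L φ ω) := by
  have : (fun ω => R φ ω - L φ ω)
      = fun ω => ∏ i ∈ Finset.range φ.length, factor (φ.getD i false) (V (φ.take i) ω) := by
    funext ω; exact hlen φ ω
  rw [this]
  refine Finset.measurable_prod _ fun i _ => ?_
  have : Measurable (factor (φ.getD i false)) := by
    cases (φ.getD i false)
    · rw [show factor false = id from funext fun x => by simp [factor]]; exact measurable_id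
    · rw [show factor true = fun x => 1 - x from funext fun x => by simp [factor]]
      exact measurable_const.sub measurable_id
  exact this.comp (hVmeas _)

include hgood in
lemma integrable_lensq (φ : List Bool) :
    Integrable (fun ω => (R φ ω - L φ ω) ^ 2) (ℙ : Measure Ω) := by
  refine Integrable.mono' (integrable_const (1:ℝ))
    (((measurable_len' V L R hVmeas hlen φ).pow_const 2).aestronglyMeasurable) ?_
  filter_upwards [hgood] with ω hω
  obtain ⟨h1, h2⟩ := hω φ
  rw [Real.norm_eq_abs, abs_of_nonneg (by positivity)]
  nlinarith

include hVunif in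
lemma integral_factor_sq (φ : List Bool) (b : Bool) :
    ∫ ω, (factor b (V φ ω)) ^ 2 ∂(ℙ : Measure Ω) = 1 / 3 := by
  have hfm : Measurable (fun x : ℝ => (factor b x) ^ 2) := by
    cases b
    · simpa [factor] using (measurable_id.pow_const 2 : Measurable fun x : ℝ => x ^ 2)
    · exact ((measurable_const.sub measurable_id).pow_const 2 :
        Measurable fun x : ℝ => (1 - x) ^ 2)
  rw [← integral_map (hVmeas φ).aemeasurable hfm.aestronglyMeasurable, hVunif φ]
  rw [MeasureTheory.integral_Icc_eq_integral_Ioc,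
    ← intervalIntegral.integral_of_le (by norm_num : (0:ℝ) ≤ 1)]
  cases b
  · simp only [factor, Bool.false_eq_true, if_false]
    rw [integral_pow]; norm_num
  · simp only [factor, if_true]
    have c1 : IntervalIntegrable (fun x : ℝ => 1 - 2 * x) volume 0 1 :=
      (by continuity : Continuous fun x : ℝ => 1 - 2 * x).intervalIntegrable _ _
    have c2 : IntervalIntegrable (fun x : ℝ => x ^ 2) volume 0 1 :=
      (by continuity : Continuous fun x : ℝ => x ^ 2).intervalIntegrable _ _
    have : ∀ x : ℝ, (1 - x) ^ 2 = (1 - 2 * x) + x ^ 2 := fun x => by ring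
    simp_rw [this]
    rw [intervalIntegral.integral_add c1 c2, integral_pow,
      intervalIntegral.integral_sub intervalIntegrable_const
        ((by continuity : Continuous fun x : ℝ => 2 * x).intervalIntegrable _ _),
      intervalIntegral.integral_const_mul, integral_id, intervalIntegral.integral_const]
    norm_num

include hViid hVunif hgood hgoodV in
lemma integral_Sk (k : ℕ) :
    ∫ ω, (∑ v : Fin k → Bool, (R (List.ofFn v) ω - L (List.ofFn v) ω) ^ 2) ∂(ℙ : Measure Ω)
      = (2 / 3 : ℝ) ^ k := by
  induction k with
  | zero =>
    simp only [pow_zero]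
    have : ∀ ω : Ω, (∑ v : Fin 0 → Bool, (R (List.ofFn v) ω - L (List.ofFn v) ω) ^ 2)
        = (R [] ω - L [] ω) ^ 2 := by
      intro ω
      rw [Fintype.sum_eq_single (fun i => i.elim0)]
      · simp
      · intro v hv; exact absurd (funext fun i => i.elim0) hv
    simp_rw [this]
    have h1 : ∀ ω, R ([] : List Bool) ω - L [] ω = 1 := by
      intro ω; rw [hlen]; simp
    simp_rw [h1]
    simp
  | succ k ih =>
    have hint : ∀ φ : List Bool, Integrable (fun ω => (R φ ω - L φ ω) ^ 2) (ℙ : Measure Ω) :=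
      integrable_lensq V L R hVmeas hlen hgood
    rw [integral_finset_sum _ fun v _ => hint _]
    -- reindex by snoc
    have hre : (∑ v : Fin (k+1) → Bool, ∫ ω, (R (List.ofFn v) ω - L (List.ofFn v) ω) ^ 2 ∂ℙ)
        = ∑ p : Bool × (Fin k → Bool),
            ∫ ω, (R (List.ofFn p.2 ++ [p.1]) ω - L (List.ofFn p.2 ++ [p.1]) ω) ^ 2 ∂ℙ := by
      rw [← Equiv.sum_comp (Fin.snocEquiv (fun _ => Bool))]
      apply Finset.sum_congr rfl
      intro p _
      congr 1
      funext ω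
      congr 2 <;>
      · congr 1
        rw [show ((Fin.snocEquiv (fun _ => Bool)) p : Fin (k+1) → Bool) = Fin.snoc p.2 p.1 from rfl]
        rw [List.ofFn_succ']
        simp [Fin.snoc_castSucc, Fin.snoc_last, List.concat_eq_append]
    rw [hre, Fintype.sum_prod_type]
    have hterm : ∀ (b : Bool) (v : Fin k → Bool),
        ∫ ω, (R (List.ofFn v ++ [b]) ω - L (List.ofFn v ++ [b]) ω) ^ 2 ∂ℙ
          = (1/3 : ℝ) * ∫ ω, (R (List.ofFn v) ω - L (List.ofFn v) ω) ^ 2 ∂ℙ := by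
      intro b v
      set φ := List.ofFn v
      have hsplit : ∀ ω, (R (φ ++ [b]) ω - L (φ ++ [b]) ω) ^ 2
          = (R φ ω - L φ ω) ^ 2 * (factor b (V φ ω)) ^ 2 := by
        intro ω
        rw [hlen (φ ++ [b]) ω, hlen φ ω]
        rw [List.length_append, List.length_singleton, Finset.prod_range_succ, mul_pow]
        congr 2
        · apply Finset.prod_congr rfl
          intro i hi
          rw [Finset.mem_range] at hi
          rw [List.getD_append _ _ _ _ hi, List.take_append_of_le_length (le_of_lt hi)]
        · rw [List.take_append_of_le_length le_rfl, List.take_length]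
          congr 1
          simp [List.getD_append_right, List.getD]
      simp_rw [hsplit]
      have hindep : IndepFun (fun ω => (R φ ω - L φ ω) ^ 2)
          (fun ω => (factor b (V φ ω)) ^ 2) ℙ := by
        have h0 := indep_lensq_V V L R hVmeas hViid hlen φ
        have hfm : Measurable (fun x : ℝ => (factor b x) ^ 2) := by
          cases b
          · simpa [factor] using (measurable_id.pow_const 2 : Measurable fun x : ℝ => x ^ 2)
          · exact ((measurable_const.sub measurable_id).pow_const 2 :
              Measurable fun x : ℝ => (1 - x) ^ 2)
        exact h0.comp measurable_id hfm
      have hi1 : Integrable (fun ω => (R φ ω - L φ ω) ^ 2) (ℙ : Measure Ω) := hint φ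
      have hi2 : Integrable (fun ω => (factor b (V φ ω)) ^ 2) (ℙ : Measure Ω) := by
        refine Integrable.mono' (integrable_const (1:ℝ)) ?_ ?_
        · have hfm : Measurable (fun x : ℝ => (factor b x) ^ 2) := by
            cases b
            · simpa [factor] using (measurable_id.pow_const 2 : Measurable fun x : ℝ => x ^ 2)
            · exact ((measurable_const.sub measurable_id).pow_const 2 :
                Measurable fun x : ℝ => (1 - x) ^ 2)
          exact (hfm.comp (hVmeas φ)).aestronglyMeasurable
        · filter_upwards [hgoodV] with ω hω
          obtain ⟨h1', h2'⟩ := hω φ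
          have hω : V φ ω ∈ Set.Icc (0:ℝ) 1 := ⟨le_of_lt h1', le_of_lt h2'⟩
          obtain ⟨h1, h2⟩ := hω
          rw [Real.norm_eq_abs, abs_of_nonneg (by positivity)]
          cases b <;> simp only [factor, Bool.false_eq_true, if_false, if_true] <;> nlinarith
      have hmul : ∫ ω, (R φ ω - L φ ω) ^ 2 * factor b (V φ ω) ^ 2 ∂(ℙ : Measure Ω)
          = (∫ ω, (R φ ω - L φ ω) ^ 2 ∂ℙ) * ∫ ω, factor b (V φ ω) ^ 2 ∂ℙ :=
        hindep.integral_mul_eq_mul_integral hi1.aestronglyMeasurable hi2.aestronglyMeasurable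
      rw [hmul, integral_factor_sq V L R hVmeas hVunif hlen φ b]
      ring
    simp_rw [hterm]
    rw [Fintype.sum_bool, ← Finset.mul_sum,
      ← integral_finset_sum _ fun v _ => hint _, ih, pow_succ]
    ring

include hViid hVunif hgood hgoodV in
lemma ae_Sk_eventually_le :
    ∀ᵐ ω ∂(ℙ : Measure Ω), ∀ᶠ k in Filter.atTop,
      (∑ v : Fin k → Bool, (R (List.ofFn v) ω - L (List.ofFn v) ω) ^ 2) ≤ (3/4 : ℝ) ^ k := by
  set Sf : ℕ → Ω → ℝ := fun k ω => ∑ v : Fin k → Bool, (R (List.ofFn v) ω - L (List.ofFn v) ω) ^ 2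
    with hSf
  have hSint : ∀ k, Integrable (Sf k) (ℙ : Measure Ω) :=
    fun k => integrable_finset_sum _ fun v _ => integrable_lensq V L R hVmeas hlen hgood _
  have hSnn : ∀ k ω, 0 ≤ Sf k ω := fun k ω => Finset.sum_nonneg fun v _ => sq_nonneg _
  set s : ℕ → Set Ω := fun k => {ω | (3/4 : ℝ) ^ k ≤ Sf k ω} with hs
  have hbound : ∀ k, (ℙ : Measure Ω) (s k) ≤ ENNReal.ofReal ((8/9 : ℝ) ^ k) := by
    intro k
    have hm := mul_meas_ge_le_integral_of_nonneg
      (Filter.Eventually.of_forall (hSnn k)) (hSint k) ((3/4 : ℝ) ^ k)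
    rw [integral_Sk V L R hVmeas hViid hVunif hlen hgood hgoodV k] at hm
    have htr : ((ℙ : Measure Ω) (s k)).toReal ≤ (8/9 : ℝ) ^ k := by
      have h34 : (0:ℝ) < (3/4 : ℝ) ^ k := by positivity
      have h2 : ((ℙ : Measure Ω) (s k)).toReal ≤ (2/3 : ℝ) ^ k / (3/4 : ℝ) ^ k := by
        rw [le_div_iff₀ h34]
        calc ((ℙ : Measure Ω) (s k)).toReal * (3/4 : ℝ) ^ k
            = (3/4 : ℝ) ^ k * ((ℙ : Measure Ω) (s k)).toReal := mul_comm _ _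
          _ ≤ (2/3 : ℝ) ^ k := hm
      calc ((ℙ : Measure Ω) (s k)).toReal ≤ (2/3 : ℝ) ^ k / (3/4 : ℝ) ^ k := h2
        _ = (8/9 : ℝ) ^ k := by rw [← div_pow]; norm_num
    calc (ℙ : Measure Ω) (s k) = ENNReal.ofReal (((ℙ : Measure Ω) (s k)).toReal) :=
          (ENNReal.ofReal_toReal (measure_ne_top _ _)).symm
      _ ≤ ENNReal.ofReal ((8/9 : ℝ) ^ k) := ENNReal.ofReal_le_ofReal htr
  have hsum : (∑' k, (ℙ : Measure Ω) (s k)) ≠ ∞ := by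
    have h1 : (∑' k, (ℙ : Measure Ω) (s k)) ≤ ∑' k, ENNReal.ofReal ((8/9 : ℝ) ^ k) :=
      ENNReal.tsum_le_tsum hbound
    have h2 : (∑' k, ENNReal.ofReal ((8/9 : ℝ) ^ k))
        = ENNReal.ofReal (∑' k, (8/9 : ℝ) ^ k) := by
      rw [ENNReal.ofReal_tsum_of_nonneg (fun k => by positivity)
        (summable_geometric_of_lt_one (by norm_num) (by norm_num))]
    exact ne_top_of_le_ne_top (by rw [h2]; exact ENNReal.ofReal_ne_top) h1
  have := MeasureTheory.ae_eventually_notMem hsum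
  filter_upwards [this] with ω hω
  filter_upwards [hω] with k hk
  rw [hs] at hk
  simp only [Set.mem_setOf_eq, not_le] at hk
  exact le_of_lt hk

end prob
end DGAux

open Finset in
lemma sq_sum_le_weighted (c : ℕ → ℝ) (hc1 : ∀ l, |c l| ≤ 1) (n : ℕ) :
    (∑ l ∈ range n, |c l|) ^ 2 ≤ ∑ l ∈ range n, |c l| * (2 * l + 1) := by
  induction n with
  | zero => simp
  | succ n ih =>
    rw [Finset.sum_range_succ, Finset.sum_range_succ]
    have hB : (∑ l ∈ range n, |c l|) ≤ n := by
      calc (∑ l ∈ range n, |c l|) ≤ ∑ l ∈ range n, (1:ℝ) :=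
            Finset.sum_le_sum fun i _ => hc1 i
        _ = n := by simp
    have hcn : 0 ≤ |c n| := abs_nonneg _
    have hsq : |c n| ^ 2 ≤ |c n| := by nlinarith [hc1 n]
    have hBnn : (0:ℝ) ≤ ∑ l ∈ range n, |c l| := Finset.sum_nonneg fun i _ => abs_nonneg _
    nlinarith [ih]

lemma sq_tsum_le_weighted (c : ℕ → ℝ) (hc1 : ∀ l, |c l| ≤ 1)
    (hs : Summable fun l => |c l| * (2 * l + 1)) :
    (∑' l, c l) ^ 2 ≤ ∑' l, |c l| * (2 * (l:ℝ) + 1) := by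
  have hsc : Summable c := by
    apply Summable.of_abs
    apply hs.of_nonneg_of_le (fun l => abs_nonneg _)
    intro l
    nlinarith [abs_nonneg (c l), (Nat.cast_nonneg l : (0:ℝ) ≤ l)]
  have htend : Filter.Tendsto (fun n => (∑ l ∈ Finset.range n, c l) ^ 2)
      Filter.atTop (nhds ((∑' l, c l) ^ 2)) :=
    (hsc.hasSum.tendsto_sum_nat).pow 2
  refine le_of_tendsto htend (Filter.Eventually.of_forall fun n => ?_)
  have h1 : (∑ l ∈ Finset.range n, c l) ^ 2 ≤ (∑ l ∈ Finset.range n, |c l|) ^ 2 := by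
    have := Finset.abs_sum_le_sum_abs c (Finset.range n)
    have h0 : (0:ℝ) ≤ ∑ l ∈ Finset.range n, |c l| := Finset.sum_nonneg fun i _ => abs_nonneg _
    calc (∑ l ∈ Finset.range n, c l) ^ 2 = |∑ l ∈ Finset.range n, c l| ^ 2 := (sq_abs _).symm
      _ ≤ (∑ l ∈ Finset.range n, |c l|) ^ 2 := by
          nlinarith [abs_nonneg (∑ l ∈ Finset.range n, c l)]
  refine h1.trans ((sq_sum_le_weighted c hc1 n).trans ?_)
  exact Summable.sum_le_tsum (Finset.range n) (fun i _ => by positivity) hs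

lemma summable_weight {r : ℝ} (h0 : 0 ≤ r) (h1 : r < 1) :
    Summable (fun l : ℕ => (2 * (l:ℝ) + 1) * r ^ l) := by
  have h := summable_pow_mul_geometric_of_norm_lt_one (R := ℝ) 1 (r := r)
    (by rwa [Real.norm_eq_abs, abs_of_nonneg h0])
  have h' := summable_geometric_of_lt_one h0 h1
  have := (h.mul_left 2).add h'
  apply this.congr
  intro b
  simp
  ring

lemma summable_weighted_of_decay {f : ℕ → ℝ} {D r : ℝ} (hr0 : 0 ≤ r) (hr1 : r < 1)
    (hf0 : ∀ l, 0 ≤ f l) (hfb : ∀ l, f l ≤ D * r ^ l) :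
    Summable (fun l => f l * (2 * (l:ℝ) + 1)) ∧
      (∑' l, f l * (2 * (l:ℝ) + 1)) ≤ D * ∑' l : ℕ, (2 * (l:ℝ) + 1) * r ^ l := by
  have hw := summable_weight hr0 hr1
  have hterm : ∀ l : ℕ, f l * (2 * (l:ℝ) + 1) ≤ D * ((2 * (l:ℝ) + 1) * r ^ l) := by
    intro l
    have h1 : f l * (2 * (l:ℝ) + 1) ≤ (D * r ^ l) * (2 * (l:ℝ) + 1) := by
      apply mul_le_mul_of_nonneg_right (hfb l)
      positivity
    calc f l * (2 * (l:ℝ) + 1) ≤ (D * r ^ l) * (2 * (l:ℝ) + 1) := h1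
      _ = D * ((2 * (l:ℝ) + 1) * r ^ l) := by ring
  have hs : Summable (fun l => f l * (2 * (l:ℝ) + 1)) := by
    apply Summable.of_nonneg_of_le (fun l => mul_nonneg (hf0 l) (by positivity)) hterm (hw.mul_left D)
  exact ⟨hs, (Summable.tsum_le_tsum hterm hs (hw.mul_left D)).trans_eq (tsum_mul_left)⟩

lemma two_min_eq (x y : ℝ) : x + y - |x - y| = 2 * min x y := by
  rcases le_total x y with h | h
  · rw [abs_of_nonpos (by linarith), min_eq_left h]; ring
  · rw [abs_of_nonneg (by linarith), min_eq_right h]; ring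

/-- Properties of the random pseudometric
`d_G(α,β)² = ∑_{k>J} (I_{α,k}+I_{β,k})(2(k-J)-1) - (∑_{k>J}(I_{α,k}-I_{β,k}))²`
(here written with `k = J+1+l`): almost surely
`d_G(α,β)² ≥ ∑_{k>J} 2(2(k-J)-1)(I_{α,k} ∧ I_{β,k}) > 0` for `α ≠ β`, and `d_G` and
`d₂(α,β) = 2^{-J(α,β)}` induce the same topology on `[0,1]`. -/
theorem dG_lower_bound_and_equivalence
    (Ω : Type*) [MeasureSpace Ω] [IsProbabilityMeasure (ℙ : Measure Ω)]
    (V : List Bool → Ω → ℝ)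
    (hVmeas : ∀ φ, Measurable (V φ))
    (hViid : iIndepFun V ℙ)
    (hVunif : ∀ φ, Measure.map (V φ) ℙ = volume.restrict (Set.Icc (0:ℝ) 1))
    (L R : List Bool → Ω → ℝ)
    (hL0 : ∀ ω, L [] ω = 0) (hR0 : ∀ ω, R [] ω = 1)
    (hLf : ∀ φ ω, L (φ ++ [false]) ω = L φ ω)
    (hRt : ∀ φ ω, R (φ ++ [true]) ω = R φ ω)
    (hRf : ∀ φ ω, R (φ ++ [false]) ω = L φ ω + (R φ ω - L φ ω) * V φ ω)
    (hLt : ∀ φ ω, L (φ ++ [true]) ω = R (φ ++ [false]) ω)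
    (w : ℝ → ℕ → Ω → List Bool)
    (hw : ∀ α ∈ Set.Icc (0:ℝ) 1, ∀ k ω, (w α k ω).length = k ∧
      L (w α k ω) ω ≤ α ∧ (α < R (w α k ω) ω ∨ (α = 1 ∧ R (w α k ω) ω = 1)))
    (J : ℝ → ℝ → Ω → ℕ)
    (hJ : ∀ α β ω, α ≠ β → ∀ j : ℕ, j ≤ J α β ω ↔ w α j ω = w β j ω)
    (d2 dG : ℝ → ℝ → Ω → ℝ)
    (hd2 : ∀ α β ω, α ≠ β → d2 α β ω = (2:ℝ) ^ (-(J α β ω : ℤ)))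
    (hd2self : ∀ α ω, d2 α α ω = 0)
    (hdGnn : ∀ α β ω, 0 ≤ dG α β ω)
    (hdGself : ∀ α ω, dG α α ω = 0)
    (hdG : ∀ α β ω, α ≠ β → (dG α β ω) ^ 2 =
      (∑' l : ℕ,
        ((R (w α (J α β ω + 1 + l) ω) ω - L (w α (J α β ω + 1 + l) ω) ω) +
         (R (w β (J α β ω + 1 + l) ω) ω - L (w β (J α β ω + 1 + l) ω) ω)) *
          (2 * (l : ℝ) + 1)) -
      (∑' l : ℕ,
        ((R (w α (J α β ω + 1 + l) ω) ω - L (w α (J α β ω + 1 + l) ω) ω) -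
         (R (w β (J α β ω + 1 + l) ω) ω - L (w β (J α β ω + 1 + l) ω) ω))) ^ 2) :
    ∀ᵐ ω ∂ℙ,
      (∀ α ∈ Set.Icc (0:ℝ) 1, ∀ β ∈ Set.Icc (0:ℝ) 1, α ≠ β →
        (∑' l : ℕ, 2 * (2 * (l : ℝ) + 1) *
            min (R (w α (J α β ω + 1 + l) ω) ω - L (w α (J α β ω + 1 + l) ω) ω)
                (R (w β (J α β ω + 1 + l) ω) ω - L (w β (J α β ω + 1 + l) ω) ω)) ≤
          (dG α β ω) ^ 2 ∧
        0 < (dG α β ω) ^ 2) ∧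
      (∀ α ∈ Set.Icc (0:ℝ) 1, ∀ ε : ℝ, 0 < ε →
        (∃ δ > (0:ℝ), ∀ β ∈ Set.Icc (0:ℝ) 1, d2 α β ω < δ → dG α β ω < ε) ∧
        (∃ δ > (0:ℝ), ∀ β ∈ Set.Icc (0:ℝ) 1, dG α β ω < δ → d2 α β ω < ε)) := by
  classical
  have hlen : ∀ (φ : List Bool) (ω : Ω), R φ ω - L φ ω
      = ∏ i ∈ Finset.range φ.length, DGAux.factor (φ.getD i false) (V (φ.take i) ω) :=
    fun φ ω => DGAux.len_prod V L R hL0 hR0 hLf hRt hRf hLt φ ω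
  have hgoodV := DGAux.ae_good V hVmeas hVunif
  have hgood : ∀ᵐ ω ∂(ℙ : Measure Ω), ∀ φ, 0 < R φ ω - L φ ω ∧ R φ ω - L φ ω ≤ 1 := by
    filter_upwards [hgoodV] with ω hω
    exact fun φ => ⟨DGAux.len_pos_of_good V L R hL0 hR0 hLf hRt hRf hLt hω φ,
      DGAux.len_le_one_of_good V L R hL0 hR0 hLf hRt hRf hLt hω φ⟩
  have hBC := DGAux.ae_Sk_eventually_le V L R hVmeas hViid hVunif hlen hgood hgoodV
  filter_upwards [hgoodV, hBC] with ω hV hBCω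
  -- deterministic part
  set r : ℝ := Real.sqrt (3/4) with hr
  have hr0 : 0 < r := Real.sqrt_pos.mpr (by norm_num)
  have hr1 : r < 1 := by
    rw [hr, show (1:ℝ) = Real.sqrt 1 from (Real.sqrt_one).symm]
    exact Real.sqrt_lt_sqrt (by norm_num) (by norm_num)
  have hrsq : r ^ 2 = 3/4 := Real.sq_sqrt (by norm_num)
  have hpos : ∀ φ, 0 < R φ ω - L φ ω :=
    DGAux.len_pos_of_good V L R hL0 hR0 hLf hRt hRf hLt hV
  have hle1 : ∀ φ, R φ ω - L φ ω ≤ 1 :=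
    DGAux.len_le_one_of_good V L R hL0 hR0 hLf hRt hRf hLt hV
  obtain ⟨K, hK⟩ := Filter.eventually_atTop.mp hBCω
  have hrK : 0 < r ^ K := pow_pos hr0 K
  set C : ℝ := (r ^ K)⁻¹ with hC
  have hC0 : 0 < C := inv_pos.mpr hrK
  have hC1 : 1 ≤ C := by
    rw [hC]
    rw [le_inv_comm₀ one_pos hrK]
    simpa using pow_le_one₀ hr0.le hr1.le
  have hCb : ∀ φ : List Bool, R φ ω - L φ ω ≤ C * r ^ φ.length := by
    intro φ
    rcases le_or_gt K φ.length with hcase | hcase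
    · have h1 : (R φ ω - L φ ω) ^ 2 ≤ (3/4 : ℝ) ^ φ.length := by
        refine le_trans ?_ (hK φ.length hcase)
        have hv : List.ofFn φ.get = φ := List.ofFn_get φ
        calc (R φ ω - L φ ω) ^ 2
            = (R (List.ofFn φ.get) ω - L (List.ofFn φ.get) ω) ^ 2 := by rw [hv]
          _ ≤ ∑ v : Fin φ.length → Bool, (R (List.ofFn v) ω - L (List.ofFn v) ω) ^ 2 :=
            Finset.single_le_sum
              (f := fun v : Fin φ.length → Bool => (R (List.ofFn v) ω - L (List.ofFn v) ω) ^ 2)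
              (fun v _ => sq_nonneg _) (Finset.mem_univ _)
      have h2 : (R φ ω - L φ ω) ^ 2 ≤ (r ^ φ.length) ^ 2 := by
        rw [← pow_mul, mul_comm, pow_mul, hrsq]; exact h1
      have h3 : R φ ω - L φ ω ≤ r ^ φ.length := by
        nlinarith [hpos φ, pow_pos hr0 φ.length]
      calc R φ ω - L φ ω ≤ r ^ φ.length := h3
        _ = 1 * r ^ φ.length := (one_mul _).symm
        _ ≤ C * r ^ φ.length :=
          mul_le_mul_of_nonneg_right hC1 (pow_pos hr0 _).le
    · have hKl : r ^ K ≤ r ^ φ.length := pow_le_pow_of_le_one hr0.le hr1.le hcase.le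
      have h2 : 1 ≤ C * r ^ φ.length := by
        calc (1:ℝ) = (r ^ K)⁻¹ * r ^ K := (inv_mul_cancel₀ hrK.ne').symm
          _ ≤ (r ^ K)⁻¹ * r ^ φ.length :=
            mul_le_mul_of_nonneg_left hKl (inv_pos.mpr hrK).le
      exact (hle1 φ).trans h2
  set W : ℝ := ∑' l : ℕ, (2 * (l:ℝ) + 1) * r ^ l with hWdef
  have hW0 : 0 ≤ W := tsum_nonneg fun l => by positivity
  -- the key pointwise estimates
  have key : ∀ α, α ∈ Set.Icc (0:ℝ) 1 → ∀ β, β ∈ Set.Icc (0:ℝ) 1 → α ≠ β →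
      (∑' l : ℕ, 2 * (2 * (l : ℝ) + 1) *
          min (R (w α (J α β ω + 1 + l) ω) ω - L (w α (J α β ω + 1 + l) ω) ω)
              (R (w β (J α β ω + 1 + l) ω) ω - L (w β (J α β ω + 1 + l) ω) ω)) ≤
        (dG α β ω) ^ 2
      ∧ 0 < (dG α β ω) ^ 2
      ∧ (dG α β ω) ^ 2 ≤ 2 * (C * r ^ (J α β ω + 1)) * W
      ∧ 2 * min (R (w α (J α β ω + 1) ω) ω - L (w α (J α β ω + 1) ω) ω)
            (R (w β (J α β ω + 1) ω) ω - L (w β (J α β ω + 1) ω) ω) ≤ (dG α β ω) ^ 2 := by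
    intro α hα β hβ hne
    set n := J α β ω with hn
    set a : ℕ → ℝ := fun l => R (w α (n + 1 + l) ω) ω - L (w α (n + 1 + l) ω) ω with ha
    set b : ℕ → ℝ := fun l => R (w β (n + 1 + l) ω) ω - L (w β (n + 1 + l) ω) ω with hb
    have ha0 : ∀ l, 0 < a l := fun l => hpos _
    have hb0 : ∀ l, 0 < b l := fun l => hpos _
    have ha1 : ∀ l, a l ≤ 1 := fun l => hle1 _
    have hb1 : ∀ l, b l ≤ 1 := fun l => hle1 _
    have hDa : ∀ l, a l ≤ (C * r ^ (n+1)) * r ^ l := by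
      intro l
      have hlenw : (w α (n + 1 + l) ω).length = n + 1 + l := (hw α hα (n+1+l) ω).1
      have h := hCb (w α (n + 1 + l) ω)
      rw [hlenw] at h
      calc a l ≤ C * r ^ (n + 1 + l) := h
        _ = (C * r ^ (n+1)) * r ^ l := by rw [pow_add]; ring
    have hDb : ∀ l, b l ≤ (C * r ^ (n+1)) * r ^ l := by
      intro l
      have hlenw : (w β (n + 1 + l) ω).length = n + 1 + l := (hw β hβ (n+1+l) ω).1
      have h := hCb (w β (n + 1 + l) ω)
      rw [hlenw] at h
      calc b l ≤ C * r ^ (n + 1 + l) := h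
        _ = (C * r ^ (n+1)) * r ^ l := by rw [pow_add]; ring
    have hSa := summable_weighted_of_decay hr0.le hr1 (fun l => (ha0 l).le) hDa
    have hSb := summable_weighted_of_decay hr0.le hr1 (fun l => (hb0 l).le) hDb
    have hSab : Summable (fun l => (a l + b l) * (2 * (l:ℝ) + 1)) :=
      (hSa.1.add hSb.1).congr (fun l => by ring)
    have hABdecay := summable_weighted_of_decay hr0.le hr1
      (f := fun l => a l + b l) (fun l => add_nonneg (ha0 l).le (hb0 l).le)
      (fun l => by
        calc a l + b l ≤ (C * r ^ (n+1)) * r ^ l + (C * r ^ (n+1)) * r ^ l :=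
              add_le_add (hDa l) (hDb l)
          _ = (2 * (C * r ^ (n+1))) * r ^ l := by ring)
    have htsum_ab_le : (∑' l : ℕ, (a l + b l) * (2 * (l:ℝ) + 1)) ≤ 2 * (C * r ^ (n+1)) * W :=
      hABdecay.2
    set c : ℕ → ℝ := fun l => a l - b l with hcdef
    have hc1 : ∀ l, |c l| ≤ 1 := by
      intro l
      rw [abs_le]
      constructor
      · have := ha0 l; have := hb1 l; simp only [hcdef]; linarith
      · have := ha1 l; have := hb0 l; simp only [hcdef]; linarith
    have habs : Summable (fun l => |c l| * (2 * (l:ℝ) + 1)) := by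
      refine Summable.of_nonneg_of_le (fun l => by positivity) (fun l => ?_) hSab
      apply mul_le_mul_of_nonneg_right _ (by positivity)
      rw [abs_le]
      constructor
      · have := ha0 l; have := hb0 l; simp only [hcdef]; linarith
      · have := ha0 l; have := hb0 l; simp only [hcdef]; linarith
    have hsq := sq_tsum_le_weighted c hc1 habs
    have hmin_s : Summable (fun l : ℕ => 2 * (2 * (l:ℝ) + 1) * min (a l) (b l)) := by
      refine Summable.of_nonneg_of_le (fun l => ?_) (fun l => ?_) hSab
      · have := le_min (ha0 l).le (hb0 l).le
        positivity
      · have hm : 2 * min (a l) (b l) ≤ a l + b l := by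
          rcases le_total (a l) (b l) with h | h
          · rw [min_eq_left h]; linarith
          · rw [min_eq_right h]; linarith
        calc 2 * (2 * (l:ℝ) + 1) * min (a l) (b l)
            = (2 * min (a l) (b l)) * (2 * (l:ℝ) + 1) := by ring
          _ ≤ (a l + b l) * (2 * (l:ℝ) + 1) :=
            mul_le_mul_of_nonneg_right hm (by positivity)
    have hdiff : (∑' l : ℕ, (a l + b l) * (2 * (l:ℝ) + 1)) - (∑' l, |c l| * (2 * (l:ℝ) + 1))
        = ∑' l : ℕ, 2 * (2 * (l:ℝ) + 1) * min (a l) (b l) := by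
      rw [← Summable.tsum_sub hSab habs]
      congr 1
      funext l
      have h2 := two_min_eq (a l) (b l)
      have hcl : c l = a l - b l := rfl
      rw [← sub_mul, hcl, h2]
      ring
    have hG : (dG α β ω) ^ 2 = (∑' l : ℕ, (a l + b l) * (2 * (l:ℝ) + 1)) - (∑' l, c l) ^ 2 :=
      hdG α β ω hne
    have h1 : (∑' l : ℕ, 2 * (2 * (l:ℝ) + 1) * min (a l) (b l)) ≤ (dG α β ω) ^ 2 := by
      rw [hG]
      linarith [hsq, hdiff]
    have hfirst : 2 * (2 * ((0:ℕ):ℝ) + 1) * min (a 0) (b 0)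
        ≤ ∑' l : ℕ, 2 * (2 * (l:ℝ) + 1) * min (a l) (b l) := by
      refine Summable.le_tsum hmin_s 0 (fun j _ => ?_)
      have := le_min (ha0 j).le (hb0 j).le
      positivity
    have hminpos : 0 < min (a 0) (b 0) := lt_min (ha0 0) (hb0 0)
    have h2 : 0 < (dG α β ω) ^ 2 := by
      have h0 : (0:ℝ) < 2 * (2 * ((0:ℕ):ℝ) + 1) * min (a 0) (b 0) := by
        have hcc : (2:ℝ) * (2 * ((0:ℕ):ℝ) + 1) = 2 := by norm_num
        rw [hcc]
        linarith [hminpos]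
      linarith [h1, hfirst]
    have h3 : (dG α β ω) ^ 2 ≤ 2 * (C * r ^ (n+1)) * W := by
      rw [hG]
      have := sq_nonneg (∑' l, c l)
      linarith [htsum_ab_le]
    have h4 : 2 * min (a 0) (b 0) ≤ (dG α β ω) ^ 2 := by
      have heq : 2 * (2 * ((0:ℕ):ℝ) + 1) * min (a 0) (b 0) = 2 * min (a 0) (b 0) := by
        norm_num
      linarith [hfirst, h1]
    exact ⟨h1, h2, h3, h4⟩
  constructor
  · intro α hα β hβ hne
    obtain ⟨h1, h2, _, _⟩ := key α hα β hβ hne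
    exact ⟨h1, h2⟩
  · intro α hα ε hε
    constructor
    · -- d2 small → dG small
      set D0 : ℝ := 2 * C * W + 1 with hD0
      have hD0pos : 0 < D0 := by positivity
      obtain ⟨N, hN⟩ : ∃ N : ℕ, r ^ N < ε ^ 2 / D0 := by
        have ht := tendsto_pow_atTop_nhds_zero_of_lt_one hr0.le hr1
        have := ht.eventually_lt_const (by positivity : (0:ℝ) < ε ^ 2 / D0)
        exact this.exists
      refine ⟨(2:ℝ) ^ (-(N:ℤ)), by positivity, ?_⟩
      intro β hβ hd2lt
      rcases eq_or_ne α β with rfl | hne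
      · rw [hdGself]; exact hε
      · have hJN : N < J α β ω := by
          rw [hd2 α β ω hne] at hd2lt
          have := (zpow_lt_zpow_iff_right₀ (one_lt_two : (1:ℝ) < 2)).mp hd2lt
          omega
        obtain ⟨_, _, h3, _⟩ := key α hα β hβ hne
        have hrle : r ^ (J α β ω + 1) ≤ r ^ N :=
          pow_le_pow_of_le_one hr0.le hr1.le (by omega)
        have hb1 : (dG α β ω) ^ 2 ≤ D0 * r ^ N := by
          calc (dG α β ω) ^ 2 ≤ 2 * (C * r ^ (J α β ω + 1)) * W := h3
            _ = (2 * C * W) * r ^ (J α β ω + 1) := by ring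
            _ ≤ (2 * C * W) * r ^ N :=
              mul_le_mul_of_nonneg_left hrle (by positivity)
            _ ≤ D0 * r ^ N := by
              apply mul_le_mul_of_nonneg_right _ (pow_pos hr0 N).le
              rw [hD0]; linarith
        have hb2 : (dG α β ω) ^ 2 < ε ^ 2 := by
          calc (dG α β ω) ^ 2 ≤ D0 * r ^ N := hb1
            _ < D0 * (ε ^ 2 / D0) := by
              exact mul_lt_mul_of_pos_left hN hD0pos
            _ = ε ^ 2 := by field_simp
        exact lt_of_pow_lt_pow_left₀ 2 hε.le hb2
    · -- dG small → d2 small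
      obtain ⟨N, hN⟩ : ∃ N : ℕ, (2:ℝ) ^ (-(N:ℤ)) < ε := by
        have hhalf : ∀ N : ℕ, (2:ℝ) ^ (-(N:ℤ)) = (1/2 : ℝ) ^ N := by
          intro N
          rw [zpow_neg, ← inv_zpow, zpow_natCast]
          norm_num
        have ht := tendsto_pow_atTop_nhds_zero_of_lt_one
          (by norm_num : (0:ℝ) ≤ 1/2) (by norm_num : (1/2:ℝ) < 1)
        obtain ⟨N, hN⟩ := (ht.eventually_lt_const hε).exists
        exact ⟨N, by rw [hhalf]; exact hN⟩
      set mlen : ℝ := (Finset.range (N+2)).inf' (by simp) (fun j =>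
        Finset.univ.inf' Finset.univ_nonempty (fun v : Fin j → Bool =>
          R (List.ofFn v) ω - L (List.ofFn v) ω)) with hml
      have hm0 : 0 < mlen := by
        rw [hml, Finset.lt_inf'_iff]
        intro j _
        rw [Finset.lt_inf'_iff]
        intro v _
        exact hpos _
      have hmle : ∀ φ : List Bool, φ.length ≤ N + 1 → mlen ≤ R φ ω - L φ ω := by
        intro φ hφ
        have h1 : mlen ≤ Finset.univ.inf' Finset.univ_nonempty
            (fun v : Fin φ.length → Bool => R (List.ofFn v) ω - L (List.ofFn v) ω) := by
          rw [hml]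
          exact Finset.inf'_le _ (Finset.mem_range.mpr (by omega))
        have h2 : Finset.univ.inf' Finset.univ_nonempty
            (fun v : Fin φ.length → Bool => R (List.ofFn v) ω - L (List.ofFn v) ω)
              ≤ R (List.ofFn φ.get) ω - L (List.ofFn φ.get) ω :=
          Finset.inf'_le _ (Finset.mem_univ _)
        rw [List.ofFn_get] at h2
        exact h1.trans h2
      refine ⟨Real.sqrt (2 * mlen), Real.sqrt_pos.mpr (by linarith), ?_⟩
      intro β hβ hdGlt
      rcases eq_or_ne α β with rfl | hne
      · rw [hd2self]; exact hε
      · by_contra hcon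
        push_neg at hcon
        have hd2v : ε ≤ (2:ℝ) ^ (-(J α β ω : ℤ)) := by
          rw [← hd2 α β ω hne]; exact hcon
        have hJN : J α β ω < N := by
          have hlt : (2:ℝ) ^ (-(N:ℤ)) < (2:ℝ) ^ (-(J α β ω : ℤ)) := lt_of_lt_of_le hN hd2v
          have := (zpow_lt_zpow_iff_right₀ (one_lt_two : (1:ℝ) < 2)).mp hlt
          omega
        obtain ⟨_, _, _, h4⟩ := key α hα β hβ hne
        have hla : (w α (J α β ω + 1) ω).length = J α β ω + 1 := (hw α hα _ ω).1
        have hlb : (w β (J α β ω + 1) ω).length = J α β ω + 1 := (hw β hβ _ ω).1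
        have hma : mlen ≤ R (w α (J α β ω + 1) ω) ω - L (w α (J α β ω + 1) ω) ω :=
          hmle _ (by omega)
        have hmb : mlen ≤ R (w β (J α β ω + 1) ω) ω - L (w β (J α β ω + 1) ω) ω :=
          hmle _ (by omega)
        have hminm : mlen ≤ min (R (w α (J α β ω + 1) ω) ω - L (w α (J α β ω + 1) ω) ω)
            (R (w β (J α β ω + 1) ω) ω - L (w β (J α β ω + 1) ω) ω) := le_min hma hmb
        have hlow : 2 * mlen ≤ (dG α β ω) ^ 2 := by linarith [h4]
        have hup : (dG α β ω) ^ 2 < Real.sqrt (2 * mlen) ^ 2 :=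
          pow_lt_pow_left₀ hdGlt (hdGnn α β ω) (by norm_num)
        rw [Real.sq_sqrt (by linarith : (0:ℝ) ≤ 2 * mlen)] at hup
        linarith
end
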